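/- arXiv:1111.2343 — 8 statements merged into one kernel-verified Lean document; each statement's English description precedes it below -/
import Mathlib

section
/- Let X_J be the (n+1)×(n+1) matrix over ℚ whose (i, i+1) entry is 1 for each i ∈ {1, ..., n} \ J and all of whose other entries are 0. Then X_J is nilpotent and for every k ≥ 0, rank(X_J^k) = Σ_{p ∈ P(J)} max(p - k, 0); that is, the Jordan type of X_J is the partition P(J). -/
/-- In type `A_n`: the matrix `X_J` with a 1 in entry `(i, i+1)` (1-based) for each
`i ∈ {1,...,n} \ J` and zeros elsewhere is nilpotent with Jordan type the partition
`P(J) = [(n+1-d_r) (d_r - d_{r-1}) ... (d_2 - d_1) d_1]`, i.e. for all `k ≥ 0`,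
`rank (X_J ^ k) = Σ_{p ∈ P(J)} max (p - k) 0`. -/
theorem stmt_1 (n r : ℕ) (hn : 1 ≤ n)
    (d : ℕ → ℕ) (h0 : d 0 = 0)
    (hmono : ∀ i, i < r → d i < d (i + 1))
    (hdn : d r ≤ n)
    (J : Finset ℕ) (hJ : J = (Finset.Icc 1 r).image d)
    (X : Matrix (Fin (n + 1)) (Fin (n + 1)) ℚ)
    (hX : X = Matrix.of fun k l : Fin (n + 1) =>
      if l.val = k.val + 1 ∧ (k.val + 1) ∉ J then (1 : ℚ) else 0)
    (P : Multiset ℕ)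
    (hP : P = (n + 1 - d r) ::ₘ (Finset.Icc 1 r).val.map fun i => d i - d (i - 1)) :
    IsNilpotent X ∧ ∀ k : ℕ, (X ^ k).rank = (P.map fun p => p - k).sum := by
  classical
  -- monotonicity of d
  have hd_mono : ∀ a b : ℕ, a ≤ b → b ≤ r → d a ≤ d b := by
    intro a b hab hbr
    induction b with
    | zero =>
      have : a = 0 := by omega
      rw [this]
    | succ b ih =>
      rcases Nat.eq_or_lt_of_le hab with h | h
      · exact h ▸ le_refl _
      · exact le_trans (ih (by omega) (by omega)) (le_of_lt (hmono b (by omega)))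
  have hd_smono : ∀ a b : ℕ, a < b → b ≤ r → d a < d b := by
    intro a b hab hbr
    have h1 : d a ≤ d (b - 1) := hd_mono a (b - 1) (by omega) (by omega)
    have h2 : d (b - 1) < d (b - 1 + 1) := hmono (b - 1) (by omega)
    have h3 : b - 1 + 1 = b := by omega
    rw [h3] at h2
    omega
  -- the power entry formula
  have hpow : ∀ k : ℕ, ∀ a b : Fin (n + 1), (X ^ k) a b =
      if (b : ℕ) = (a : ℕ) + k ∧ ∀ t ∈ Finset.Ioc (a : ℕ) ((a : ℕ) + k), t ∉ J
      then (1 : ℚ) else 0 := by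
    intro k
    induction k with
    | zero =>
      intro a b
      simp only [pow_zero, Matrix.one_apply, add_zero, Finset.Ioc_self, Finset.notMem_empty,
        false_implies, implies_true, and_true]
      by_cases h : b = a
      · subst h; simp
      · rw [if_neg (fun h' => h h'.symm), if_neg (fun h' => h (Fin.ext h'))]
    | succ k ih =>
      intro a b
      rw [pow_succ, Matrix.mul_apply]
      by_cases hk : (a : ℕ) + k ≤ n
      · set c : Fin (n + 1) := ⟨(a : ℕ) + k, by omega⟩ with hc
        rw [Finset.sum_eq_single c]
        · rw [ih, hX]
          simp only [Matrix.of_apply]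
          by_cases hC : ∀ t ∈ Finset.Ioc (a : ℕ) ((a : ℕ) + k), t ∉ J
          · rw [if_pos ⟨by trivial, hC⟩, one_mul]
            by_cases hb2 : (b : ℕ) = (a : ℕ) + k + 1 ∧ ((a : ℕ) + k + 1) ∉ J
            · rw [if_pos hb2, if_pos]
              refine ⟨by omega, fun t ht => ?_⟩
              rw [Finset.mem_Ioc] at ht
              by_cases hteq : t = (a : ℕ) + k + 1
              · exact hteq ▸ hb2.2
              · exact hC t (Finset.mem_Ioc.mpr ⟨ht.1, by omega⟩)
            · rw [if_neg hb2, if_neg]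
              rintro ⟨hb, hall⟩
              exact hb2 ⟨by omega, hall _ (Finset.mem_Ioc.mpr ⟨by omega, by omega⟩)⟩
          · rw [if_neg (fun h => hC h.2), zero_mul, if_neg]
            rintro ⟨hb, hall⟩
            exact hC (fun t ht => hall t
              (Finset.mem_Ioc.mpr ⟨(Finset.mem_Ioc.mp ht).1,
                by have := (Finset.mem_Ioc.mp ht).2; omega⟩))
        · intro c' _ hc'
          rw [ih]
          rw [if_neg, zero_mul]
          rintro ⟨hv, -⟩
          exact hc' (Fin.ext (by simp [hc, hv]))
        · intro h; exact absurd (Finset.mem_univ c) h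
      · rw [if_neg (by omega)]
        apply Finset.sum_eq_zero
        intro c' _
        rw [ih, if_neg, zero_mul]
        rintro ⟨hv, -⟩
        omega
  constructor
  · refine ⟨n + 1, ?_⟩
    ext a b
    rw [hpow]
    rw [if_neg (by rintro ⟨hv, -⟩; omega)]
    rfl
  intro k
  -- the index set
  set S : Finset (Fin (n + 1)) := Finset.univ.filter
    (fun a : Fin (n + 1) => (a : ℕ) + k ≤ n ∧ ∀ t ∈ Finset.Ioc (a : ℕ) ((a : ℕ) + k), t ∉ J)
    with hS
  -- columns
  have hcol : ∀ (a : Fin (n + 1)) (h1 : (a : ℕ) + k ≤ n),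
      (∀ t ∈ Finset.Ioc (a : ℕ) ((a : ℕ) + k), t ∉ J) →
      (X ^ k).transpose ⟨(a : ℕ) + k, by omega⟩ = Pi.single a (1 : ℚ) := by
    intro a h1 h2
    funext a'
    rw [Matrix.transpose_apply, hpow]
    by_cases h : a' = a
    · subst h
      rw [if_pos ⟨rfl, h2⟩, Pi.single_eq_same]
    · rw [if_neg, Pi.single_eq_of_ne h]
      rintro ⟨hv, -⟩
      have hv' : (a : ℕ) + k = (a' : ℕ) + k := hv
      exact h (Fin.ext (by omega))
  -- rank computation
  have hrank : (X ^ k).rank = S.card := by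
    rw [Matrix.rank, Matrix.range_mulVecLin]
    have hspan : Submodule.span ℚ (Set.range (X ^ k).transpose) =
        Submodule.span ℚ (Set.range (fun a : S => Pi.single (a : Fin (n + 1)) (1 : ℚ))) := by
      apply le_antisymm
      · rw [Submodule.span_le]
        rintro - ⟨b, rfl⟩
        by_cases hb : ∃ a : Fin (n + 1), a ∈ S ∧ (a : ℕ) + k = (b : ℕ)
        · obtain ⟨a, haS, hab⟩ := hb
          obtain ⟨-, h1, h2⟩ := Finset.mem_filter.mp haS
          have : (X ^ k).transpose b = Pi.single a (1 : ℚ) := by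
            have := hcol a h1 h2
            convert this using 2
            exact Fin.ext hab.symm
          rw [this]
          exact Submodule.subset_span ⟨⟨a, haS⟩, rfl⟩
        · have : (X ^ k).transpose b = 0 := by
            funext a'
            rw [Matrix.transpose_apply, hpow, if_neg]
            · rfl
            · rintro ⟨hv, hall⟩
              exact hb ⟨a', Finset.mem_filter.mpr ⟨Finset.mem_univ _, by omega, hall⟩, by omega⟩
          rw [this]
          exact Submodule.zero_mem _
      · rw [Submodule.span_le]
        rintro - ⟨⟨a, ha⟩, rfl⟩
        obtain ⟨-, h1, h2⟩ := Finset.mem_filter.mp ha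
        simp only
        rw [← hcol a h1 h2]
        exact Submodule.subset_span ⟨_, rfl⟩
    rw [show (X ^ k).col = (X ^ k).transpose from rfl, hspan]
    have hli : LinearIndependent ℚ
        (fun a : S => (Pi.single (a : Fin (n + 1)) (1 : ℚ) : Fin (n + 1) → ℚ)) := by
      have := (Pi.basisFun ℚ (Fin (n + 1))).linearIndependent
      have h2 := this.comp (fun a : S => (a : Fin (n + 1)))
        (fun x y hxy => Subtype.ext hxy)
      convert h2 using 1
      funext a
      simp [Function.comp]
    rw [finrank_span_eq_card hli, Fintype.card_coe]
  rw [hrank]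
  -- combinatorial count
  set E : ℕ → ℕ := fun j => if j < r then d (j + 1) else n + 1 with hE
  have hdisj : ∀ j j' : ℕ, j < j' → j' ≤ r →
      Disjoint (Finset.Ico (d j) (E j - k)) (Finset.Ico (d j') (E j' - k)) := by
    intro j j' h hj'
    apply Finset.disjoint_left.mpr
    intro i hi hi'
    rw [Finset.mem_Ico] at hi hi'
    have h1 : E j ≤ d j' := by
      simp only [hE]
      rw [if_pos (show j < r by omega)]
      exact hd_mono (j + 1) j' (by omega) (by omega)
    omega
  have hbij : S.card
      = ((Finset.range (r + 1)).biUnion fun j => Finset.Ico (d j) (E j - k)).card := by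
    apply Finset.card_bij (fun (a : Fin (n + 1)) (_ : a ∈ S) => (a : ℕ))
    · intro a ha
      simp only [hS, Finset.mem_filter] at ha
      obtain ⟨-, hak, hall⟩ := ha
      obtain ⟨j, hjr, hja, hjmax⟩ :
          ∃ j, j ≤ r ∧ d j ≤ (a : ℕ) ∧ ∀ m, m ≤ r → d m ≤ (a : ℕ) → m ≤ j := by
        obtain ⟨j, hj, hmax⟩ := Finset.exists_max_image
          ((Finset.range (r + 1)).filter (fun j => d j ≤ (a : ℕ))) id
          ⟨0, Finset.mem_filter.mpr ⟨Finset.mem_range.mpr (by omega), by omega⟩⟩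
        simp only [Finset.mem_filter, Finset.mem_range, id] at hj hmax
        exact ⟨j, by omega, hj.2, fun m hm hd => hmax m ⟨by omega, hd⟩⟩
      rw [Finset.mem_biUnion]
      refine ⟨j, Finset.mem_range.mpr (by omega), Finset.mem_Ico.mpr ⟨hja, ?_⟩⟩
      simp only [hE]
      by_cases hjlt : j < r
      · rw [if_pos hjlt]
        have hdj1 : (a : ℕ) < d (j + 1) := by
          by_contra h
          exact absurd (hjmax (j + 1) (by omega) (by omega)) (by omega)
        have hnm : d (j + 1) ∉ Finset.Ioc (a : ℕ) ((a : ℕ) + k) := by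
          intro hmem
          exact hall _ hmem (hJ ▸ Finset.mem_image.mpr
            ⟨j + 1, Finset.mem_Icc.mpr ⟨by omega, by omega⟩, rfl⟩)
        rw [Finset.mem_Ioc] at hnm
        omega
      · rw [if_neg hjlt]
        omega
    · intro a ha a' ha' h
      exact Fin.ext h
    · intro i hi
      rw [Finset.mem_biUnion] at hi
      obtain ⟨j, hj, hij⟩ := hi
      rw [Finset.mem_range] at hj
      rw [Finset.mem_Ico] at hij
      have hEj : E j ≤ n + 1 := by
        simp only [hE]
        split_ifs with h
        · have := hd_mono (j + 1) r (by omega) (by omega); omega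
        · omega
      have hik : i + k < E j := by omega
      have hin : i + k ≤ n := by omega
      refine ⟨⟨i, by omega⟩, Finset.mem_filter.mpr ⟨Finset.mem_univ _, by simpa using hin, ?_⟩, rfl⟩
      intro t ht htJ
      rw [Finset.mem_Ioc] at ht
      simp only at ht
      rw [hJ, Finset.mem_image] at htJ
      obtain ⟨m, hm, rfl⟩ := htJ
      rw [Finset.mem_Icc] at hm
      have hmj : j < m := by
        by_contra h
        have := hd_mono m j (by omega) (by omega)
        omega
      have hjr2 : j < r := by omega
      have hEj2 : E j = d (j + 1) := by simp only [hE]; rw [if_pos hjr2]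
      rw [hEj2] at hik
      have : d (j + 1) ≤ d m := hd_mono (j + 1) m (by omega) (by omega)
      omega
  have hcount : S.card = ∑ j ∈ Finset.range (r + 1), (Finset.Ico (d j) (E j - k)).card := by
    rw [hbij, Finset.card_biUnion]
    intro j hj j' hj' hjj'
    rw [Finset.mem_coe, Finset.mem_range] at hj hj'
    rcases Nat.lt_or_ge j j' with h | h
    · exact hdisj j j' h (by omega)
    · exact (hdisj j' j (by omega) (by omega)).symm
  rw [hcount, hP]
  simp only [Multiset.map_cons, Multiset.sum_cons, Multiset.map_map, Function.comp]
  have hmsum : ((Finset.Icc 1 r).val.map fun i => d i - d (i - 1) - k).sum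
      = ∑ i ∈ Finset.Icc 1 r, (d i - d (i - 1) - k) := rfl
  rw [hmsum]
  rw [Finset.sum_range_succ]
  have hlast : (Finset.Ico (d r) (E r - k)).card = n + 1 - d r - k := by
    rw [Nat.card_Ico]
    simp only [hE]
    rw [if_neg (lt_irrefl r)]
    omega
  rw [hlast]
  have hIcc : ∑ i ∈ Finset.Icc 1 r, (d i - d (i - 1) - k)
      = ∑ j ∈ Finset.range r, (d (j + 1) - d j - k) := by
    rw [← Finset.Ico_add_one_right_eq_Icc, Finset.sum_Ico_eq_sum_range]
    rw [show r + 1 - 1 = r from rfl]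
    apply Finset.sum_congr rfl
    intro j _
    have h1 : 1 + j = j + 1 := by omega
    rw [h1, Nat.add_sub_cancel]
  rw [hIcc]
  have hterm : ∀ j ∈ Finset.range r,
      (Finset.Ico (d j) (E j - k)).card = d (j + 1) - d j - k := by
    intro j hj
    rw [Finset.mem_range] at hj
    rw [Nat.card_Ico]
    simp only [hE]
    rw [if_pos hj]
    omega
  rw [Finset.sum_congr rfl hterm]
  omega
end

section
/- Let X_J be the (2n+1)×(2n+1) matrix over ℚ given by X_J = Σ_{i ∈ {1,...,n-1} \ J} (E_{i+1, i+2} - E_{n+i+2, n+i+1}), plus (E_{1, 2n+1} - E_{n+1, 1}) if n ∉ J. Then X_J is nilpotent and for every k ≥ 0, rank(X_J^k) = Σ_{p ∈ P_B(J)} max(p - k, 0); that is, the Jordan type of X_J is the (unreduced) type B_n partition P_B(J) = [(2(n-d_r)+1) (d_r - d_{r-1})^2 ... (d_2 - d_1)^2 d_1^2]. -/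
def nxt (n : ℕ) (J : Finset ℕ) (x : ℕ) : Option ℕ :=
  if 1 ≤ x ∧ x ≤ n - 1 ∧ x ∉ J then some (x + 1)
  else if n + 2 ≤ x ∧ x ≤ 2 * n ∧ (x - 1 - n) ∉ J then some (x - 1)
  else if n ∉ J ∧ x = 0 then some (2 * n)
  else if n ∉ J ∧ x = n then some 0
  else none

def gg (n : ℕ) (J : Finset ℕ) : ℕ → ℕ → Option ℕ
  | 0, x => some x
  | k + 1, x => (nxt n J x).bind (gg n J k)

def idx (r : ℕ) (d : ℕ → ℕ) (x : ℕ) : ℕ :=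
  Nat.find (⟨r, Or.inr le_rfl⟩ : ∃ i, x ≤ d i ∨ r ≤ i)

def ht (n r : ℕ) (d : ℕ → ℕ) (x : ℕ) : ℕ :=
  if x = 0 then n - d r
  else if x ≤ d r then d (idx r d x) - x
  else if x ≤ n then 2 * n - d r + 1 - x
  else if x ≤ n + d r then (x - n) - d (idx r d (x - n) - 1) - 1
  else x - n - d r - 1

section

variable {n r : ℕ} {d : ℕ → ℕ} {J : Finset ℕ}

lemma d_mono (hmono : ∀ i, i < r → d i < d (i + 1)) :
    ∀ {i j : ℕ}, i ≤ j → j ≤ r → d i ≤ d j := by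
  intro i j hij hjr
  induction j with
  | zero =>
    have hi : i = 0 := by omega
    exact hi ▸ le_rfl
  | succ m ih =>
    rcases Nat.eq_or_lt_of_le hij with h | h
    · exact h ▸ le_rfl
    · exact le_trans (ih (by omega) (by omega)) (le_of_lt (hmono m (by omega)))

lemma d_strict (hmono : ∀ i, i < r → d i < d (i + 1)) :
    ∀ {i j : ℕ}, i < j → j ≤ r → d i < d j := by
  intro i j hij hjr
  calc d i < d (i + 1) := hmono i (by omega)
    _ ≤ d j := d_mono hmono (by omega) hjr

lemma mem_J_iff (hJ : J = (Finset.Icc 1 r).image d) (x : ℕ) :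
    x ∈ J ↔ ∃ i, 1 ≤ i ∧ i ≤ r ∧ d i = x := by
  subst hJ; simp [Finset.mem_image, Finset.mem_Icc]
  constructor
  · rintro ⟨i, ⟨h1, h2⟩, h3⟩; exact ⟨i, h1, h2, h3⟩
  · rintro ⟨i, h1, h2, h3⟩; exact ⟨i, ⟨h1, h2⟩, h3⟩

lemma dr_mem (hr : 1 ≤ r) (hJ : J = (Finset.Icc 1 r).image d) : d r ∈ J := by
  rw [mem_J_iff hJ]; exact ⟨r, hr, le_rfl, rfl⟩

lemma dr_pos (hr : 1 ≤ r) (h0 : d 0 = 0) (hmono : ∀ i, i < r → d i < d (i + 1)) :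
    1 ≤ d r := by
  have := d_strict hmono (show 0 < r by omega) le_rfl; omega

lemma n_mem_iff (hr : 1 ≤ r) (hdn : d r ≤ n) (hJ : J = (Finset.Icc 1 r).image d)
    (hmono : ∀ i, i < r → d i < d (i + 1)) : n ∈ J ↔ d r = n := by
  rw [mem_J_iff hJ]
  constructor
  · rintro ⟨i, h1, h2, h3⟩
    have := d_mono hmono h2 le_rfl; omega
  · intro h; exact ⟨r, hr, le_rfl, h⟩

lemma idx_spec (hr : 1 ≤ r) (h0 : d 0 = 0) {x : ℕ} (h1 : 1 ≤ x) (h2 : x ≤ d r) :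
    1 ≤ idx r d x ∧ idx r d x ≤ r ∧ x ≤ d (idx r d x) ∧ d (idx r d x - 1) < x := by
  have hid : idx r d x = Nat.find (⟨r, Or.inr le_rfl⟩ : ∃ i, x ≤ d i ∨ r ≤ i) := rfl
  have hspec : x ≤ d (idx r d x) ∨ r ≤ idx r d x := by rw [hid]; exact Nat.find_spec (⟨r, Or.inr le_rfl⟩ : ∃ i, x ≤ d i ∨ r ≤ i)
  have hle : idx r d x ≤ r := by rw [hid]; exact Nat.find_le (Or.inr le_rfl)
  have hpos : 1 ≤ idx r d x := by
    by_contra h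
    have h00 : idx r d x = 0 := by omega
    rw [h00] at hspec; omega
  have hx : x ≤ d (idx r d x) := by
    rcases hspec with h | h
    · exact h
    · have he : idx r d x = r := by omega
      rw [he]; exact h2
  have hmin : ¬(x ≤ d (idx r d x - 1) ∨ r ≤ idx r d x - 1) := by
    rw [hid] at hpos ⊢
    exact Nat.find_min (⟨r, Or.inr le_rfl⟩ : ∃ i, x ≤ d i ∨ r ≤ i) (by omega)
  push_neg at hmin
  exact ⟨hpos, hle, hx, by omega⟩

lemma idx_eq (hr : 1 ≤ r) (h0 : d 0 = 0) (hmono : ∀ i, i < r → d i < d (i + 1))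
    {x i : ℕ} (hi1 : 1 ≤ i) (hir : i ≤ r) (hlo : d (i - 1) < x) (hhi : x ≤ d i) :
    idx r d x = i := by
  have hx1 : 1 ≤ x := by omega
  have hxr : x ≤ d r := le_trans hhi (d_mono hmono hir le_rfl)
  obtain ⟨p1, p2, p3, p4⟩ := idx_spec hr h0 hx1 hxr
  set i0 := idx r d x
  by_contra hne
  rcases Nat.lt_or_ge i0 i with h | h
  · have : d i0 ≤ d (i - 1) := d_mono hmono (by omega) (by omega)
    omega
  · have : i < i0 := by omega
    have : d i ≤ d (i0 - 1) := d_mono hmono (by omega) (by omega)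
    omega

lemma mem_J_idx (hr : 1 ≤ r) (h0 : d 0 = 0) (hmono : ∀ i, i < r → d i < d (i + 1))
    (hJ : J = (Finset.Icc 1 r).image d) {x : ℕ} (h1 : 1 ≤ x) (h2 : x ≤ d r) :
    x ∈ J ↔ d (idx r d x) = x := by
  obtain ⟨p1, p2, p3, p4⟩ := idx_spec hr h0 h1 h2
  rw [mem_J_iff hJ]
  constructor
  · rintro ⟨i, hi1, hi2, rfl⟩
    have : idx r d (d i) = i := idx_eq hr h0 hmono hi1 hi2
      (by have := d_strict hmono (show i - 1 < i by omega) hi2; omega) le_rfl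
    rw [this]
  · intro h; exact ⟨idx r d x, p1, p2, h⟩

end

section

variable {n r : ℕ} {d : ℕ → ℕ} {J : Finset ℕ}

lemma ht0 : ht n r d 0 = n - d r := by simp [ht]

lemma htA {x : ℕ} (h1 : 1 ≤ x) (h2 : x ≤ d r) :
    ht n r d x = d (idx r d x) - x := by
  unfold ht; rw [if_neg (by omega), if_pos h2]

lemma htB {x : ℕ} (h1 : d r < x) (h2 : x ≤ n) :
    ht n r d x = 2 * n - d r + 1 - x := by
  unfold ht; rw [if_neg (by omega), if_neg (by omega), if_pos h2]

lemma htC {x : ℕ} (hdn : d r ≤ n) (h1 : n < x) (h2 : x ≤ n + d r) :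
    ht n r d x = (x - n) - d (idx r d (x - n) - 1) - 1 := by
  unfold ht; rw [if_neg (by omega), if_neg (by omega), if_neg (by omega), if_pos h2]

lemma htD {x : ℕ} (hdn : d r ≤ n) (h1 : n + d r < x) :
    ht n r d x = x - n - d r - 1 := by
  unfold ht
  rw [if_neg (by omega), if_neg (by omega), if_neg (by omega), if_neg (by omega)]

lemma step (hn : 2 ≤ n) (hr : 1 ≤ r) (h0 : d 0 = 0)
    (hmono : ∀ i, i < r → d i < d (i + 1)) (hdn : d r ≤ n)
    (hJ : J = (Finset.Icc 1 r).image d) {x : ℕ} (hx : x ≤ 2 * n) :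
    (nxt n J x = none ∧ ht n r d x = 0) ∨
    (∃ y, nxt n J x = some y ∧ y ≤ 2 * n ∧ ht n r d y + 1 = ht n r d x) := by
  have hD1 : 1 ≤ d r := dr_pos hr h0 hmono
  have hnJ := n_mem_iff hr hdn hJ hmono
  rcases Nat.lt_or_ge x 1 with hx0 | hx1
  · -- x = 0
    have hx0 : x = 0 := by omega
    subst hx0
    by_cases hDn' : d r = n
    · left
      refine ⟨?_, by rw [ht0]; omega⟩
      unfold nxt
      rw [if_neg (by omega), if_neg (by omega),
        if_neg (by rintro ⟨hnn, -⟩; exact hnn (hnJ.mpr hDn')),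
        if_neg (by rintro ⟨-, h⟩; omega)]
    · right
      have hnn : n ∉ J := fun h => hDn' (hnJ.mp h)
      refine ⟨2 * n, ?_, by omega, ?_⟩
      · unfold nxt
        rw [if_neg (by omega), if_neg (by omega), if_pos ⟨hnn, rfl⟩]
      · have e1 : ht n r d (2 * n) = 2 * n - n - d r - 1 := htD hdn (by omega)
        rw [e1, ht0]; omega
  rcases le_or_gt x (d r) with hxD | hxD
  · -- 1 ≤ x ≤ d r
    obtain ⟨p1, p2, p3, p4⟩ := idx_spec hr h0 hx1 hxD
    have hhtx : ht n r d x = d (idx r d x) - x := htA hx1 hxD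
    by_cases hxJ : x ∈ J
    · left
      have hdi : d (idx r d x) = x := (mem_J_idx hr h0 hmono hJ hx1 hxD).mp hxJ
      refine ⟨?_, by rw [hhtx]; omega⟩
      unfold nxt
      rw [if_neg (by rintro ⟨-, -, h⟩; exact h hxJ), if_neg (by rintro ⟨h, -, -⟩; omega),
        if_neg (by rintro ⟨-, h⟩; omega),
        if_neg (by rintro ⟨hnn, h⟩; exact hnn (h ▸ hxJ))]
    · right
      have hxlt : x < d (idx r d x) :=
        lt_of_le_of_ne p3 (fun h => hxJ ((mem_J_idx hr h0 hmono hJ hx1 hxD).mpr h.symm))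
      have hxD' : x < d r := lt_of_le_of_ne hxD (fun h => hxJ (h ▸ dr_mem hr hJ))
      refine ⟨x + 1, ?_, by omega, ?_⟩
      · unfold nxt; rw [if_pos ⟨hx1, by omega, hxJ⟩]
      · have hidx1 : idx r d (x + 1) = idx r d x :=
          idx_eq hr h0 hmono p1 p2 (by omega) (by omega)
        have e1 : ht n r d (x + 1) = d (idx r d (x + 1)) - (x + 1) :=
          htA (by omega) (by omega)
        rw [e1, hidx1, hhtx]; omega
  rcases le_or_gt x n with hxn | hxn
  · -- d r < x ≤ n
    have hxJ : x ∉ J := by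
      rw [mem_J_iff hJ]; rintro ⟨i, h1, h2, h3⟩
      have := d_mono hmono h2 le_rfl; omega
    have hnn : n ∉ J := by rw [hnJ]; omega
    have hhtx : ht n r d x = 2 * n - d r + 1 - x := htB hxD hxn
    rcases Nat.lt_or_ge x n with hxn' | hxn'
    · right; refine ⟨x + 1, ?_, by omega, ?_⟩
      · unfold nxt; rw [if_pos ⟨by omega, by omega, hxJ⟩]
      · have e1 : ht n r d (x + 1) = 2 * n - d r + 1 - (x + 1) := htB (by omega) (by omega)
        rw [e1, hhtx]; omega
    · have hxe : x = n := by omega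
      subst hxe
      right; refine ⟨0, ?_, by omega, ?_⟩
      · unfold nxt
        rw [if_neg (by rintro ⟨-, h, -⟩; omega), if_neg (by rintro ⟨h, -, -⟩; omega),
          if_neg (by rintro ⟨-, h⟩; omega), if_pos ⟨hnn, rfl⟩]
      · rw [ht0, hhtx]; omega
  rcases le_or_gt x (n + d r) with hxnd | hxnd
  · -- n < x ≤ n + d r
    have hy1 : 1 ≤ x - n := by omega
    have hyD : x - n ≤ d r := by omega
    obtain ⟨q1, q2, q3, q4⟩ := idx_spec hr h0 hy1 hyD
    have hhtx : ht n r d x = (x - n) - d (idx r d (x - n) - 1) - 1 := htC hdn hxn hxnd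
    by_cases hz : x - n ≤ d (idx r d (x - n) - 1) + 1
    · left
      refine ⟨?_, by rw [hhtx]; omega⟩
      unfold nxt
      rw [if_neg (by rintro ⟨-, h, -⟩; omega), if_neg ?_,
        if_neg (by rintro ⟨-, h⟩; omega), if_neg (by rintro ⟨-, h⟩; omega)]
      rintro ⟨g1, g2, g3⟩
      rcases Nat.lt_or_ge 1 (idx r d (x - n)) with hi | hi
      · exact g3 ((mem_J_iff hJ _).mpr ⟨idx r d (x - n) - 1, by omega, by omega, by omega⟩)
      · have hd0 : d (idx r d (x - n) - 1) = 0 := by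
          rw [show idx r d (x - n) - 1 = 0 by omega, h0]
        omega
    · right
      have hym : x - 1 - n ∉ J := by
        rw [mem_J_iff hJ]; rintro ⟨j, hj1, hj2, hj3⟩
        have hjlt : j < idx r d (x - n) := by
          by_contra hc
          have : d (idx r d (x - n)) ≤ d j := d_mono hmono (by omega) hj2
          omega
        have : d j ≤ d (idx r d (x - n) - 1) := d_mono hmono (by omega) (by omega)
        omega
      refine ⟨x - 1, ?_, by omega, ?_⟩
      · unfold nxt
        rw [if_neg (by rintro ⟨-, h, -⟩; omega), if_pos ⟨by omega, by omega, hym⟩]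
      · have hidx1 : idx r d (x - 1 - n) = idx r d (x - n) := by
          rw [show x - 1 - n = (x - n) - 1 by omega]
          exact idx_eq hr h0 hmono q1 q2 (by omega) (by omega)
        have e1 : ht n r d (x - 1) = (x - 1 - n) - d (idx r d (x - 1 - n) - 1) - 1 :=
          htC hdn (by omega) (by omega)
        rw [e1, hidx1, hhtx]
        rw [show x - 1 - n = (x - n) - 1 by omega]
        omega
  · -- n + d r < x
    have hhtx : ht n r d x = x - n - d r - 1 := htD hdn hxnd
    by_cases hz : x ≤ n + d r + 1
    · left
      refine ⟨?_, by rw [hhtx]; omega⟩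
      unfold nxt
      rw [if_neg (by rintro ⟨-, h, -⟩; omega), if_neg ?_,
        if_neg (by rintro ⟨-, h⟩; omega), if_neg (by rintro ⟨-, h⟩; omega)]
      rintro ⟨g1, g2, g3⟩
      apply g3
      rw [show x - 1 - n = d r by omega]
      exact dr_mem hr hJ
    · right
      have hym : x - 1 - n ∉ J := by
        rw [mem_J_iff hJ]; rintro ⟨j, hj1, hj2, hj3⟩
        have := d_mono hmono hj2 le_rfl; omega
      refine ⟨x - 1, ?_, by omega, ?_⟩
      · unfold nxt
        rw [if_neg (by rintro ⟨-, h, -⟩; omega), if_pos ⟨by omega, by omega, hym⟩]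
      · have e1 : ht n r d (x - 1) = (x - 1) - n - d r - 1 := htD hdn (by omega)
        rw [e1, hhtx]; omega

end

section

variable {n r : ℕ} {d : ℕ → ℕ} {J : Finset ℕ}

lemma nxt_cases {x y : ℕ} (h : nxt n J x = some y) :
    (y = x + 1 ∧ 1 ≤ x ∧ x ≤ n - 1) ∨ (y = x - 1 ∧ n + 2 ≤ x ∧ x ≤ 2 * n) ∨
    (x = 0 ∧ y = 2 * n) ∨ (x = n ∧ y = 0) := by
  unfold nxt at h
  split_ifs at h with h1 h2 h3 h4 <;> simp only [Option.some_inj] at h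
  · exact Or.inl ⟨h.symm, h1.1, h1.2.1⟩
  · exact Or.inr (Or.inl ⟨h.symm, h2.1, h2.2.1⟩)
  · exact Or.inr (Or.inr (Or.inl ⟨h3.2, h.symm⟩))
  · exact Or.inr (Or.inr (Or.inr ⟨h4.2, h.symm⟩))

lemma nxt_le (hn : 2 ≤ n) {x y : ℕ} (h : nxt n J x = some y) : y ≤ 2 * n := by
  rcases nxt_cases h with ⟨h1, h2, h3⟩ | ⟨h1, h2, h3⟩ | ⟨h1, h2⟩ | ⟨h1, h2⟩ <;> omega

lemma nxt_inj (hn : 2 ≤ n) {a b c : ℕ} (ha : nxt n J a = some c) (hb : nxt n J b = some c) :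
    a = b := by
  rcases nxt_cases ha with ⟨h1, h2, h3⟩ | ⟨h1, h2, h3⟩ | ⟨h1, h2⟩ | ⟨h1, h2⟩ <;>
    rcases nxt_cases hb with ⟨g1, g2, g3⟩ | ⟨g1, g2, g3⟩ | ⟨g1, g2⟩ | ⟨g1, g2⟩ <;> omega

lemma gg_le (hn : 2 ≤ n) : ∀ (k : ℕ) {a c : ℕ}, a ≤ 2 * n → gg n J k a = some c → c ≤ 2 * n
  | 0, a, c, ha, h => by simp only [gg, Option.some_inj] at h; omega
  | k + 1, a, c, ha, h => by
    simp only [gg] at h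
    rcases Option.bind_eq_some_iff.mp h with ⟨y, hy, hgy⟩
    exact gg_le hn k (nxt_le hn hy) hgy

lemma gg_inj (hn : 2 ≤ n) :
    ∀ (k : ℕ) {a b c : ℕ}, gg n J k a = some c → gg n J k b = some c → a = b
  | 0, a, b, c, ha, hb => by
    simp only [gg, Option.some_inj] at ha hb; omega
  | k + 1, a, b, c, ha, hb => by
    simp only [gg] at ha hb
    rcases Option.bind_eq_some_iff.mp ha with ⟨y, hy, hgy⟩
    rcases Option.bind_eq_some_iff.mp hb with ⟨z, hz, hgz⟩
    have : y = z := gg_inj hn k hgy hgz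
    subst this
    exact nxt_inj hn hy hz

lemma gg_isSome_iff (hn : 2 ≤ n) (hr : 1 ≤ r) (h0 : d 0 = 0)
    (hmono : ∀ i, i < r → d i < d (i + 1)) (hdn : d r ≤ n)
    (hJ : J = (Finset.Icc 1 r).image d) :
    ∀ (k : ℕ) {x : ℕ}, x ≤ 2 * n → ((gg n J k x).isSome ↔ k ≤ ht n r d x)
  | 0, x, hx => by simp [gg]
  | k + 1, x, hx => by
    rcases step hn hr h0 hmono hdn hJ hx with ⟨hnone, hht⟩ | ⟨y, hy, hy2n, hht⟩
    · simp [gg, hnone, hht]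
    · simp only [gg, hy, Option.bind_some]
      rw [gg_isSome_iff hn hr h0 hmono hdn hJ k hy2n]
      omega

lemma ht_le (hr : 1 ≤ r) (h0 : d 0 = 0) (hmono : ∀ i, i < r → d i < d (i + 1))
    (hdn : d r ≤ n) {x : ℕ} (hx : x ≤ 2 * n) : ht n r d x ≤ 2 * n := by
  unfold ht
  split_ifs with h1 h2 h3 h4
  · omega
  · have hx1 : 1 ≤ x := by omega
    obtain ⟨p1, p2, p3, p4⟩ := idx_spec hr h0 hx1 h2
    have : d (idx r d x) ≤ d r := d_mono hmono p2 le_rfl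
    omega
  · omega
  · omega
  · omega

end

section

variable {n r : ℕ} {d : ℕ → ℕ} {J : Finset ℕ}

lemma X_entry (hn : 2 ≤ n) {X : Matrix (Fin (2 * n + 1)) (Fin (2 * n + 1)) ℚ}
    (hX : X = Matrix.of fun k l : Fin (2 * n + 1) =>
      (if l.val = k.val + 1 ∧ 1 ≤ k.val ∧ k.val ≤ n - 1 ∧ k.val ∉ J then (1 : ℚ) else 0)
        - (if k.val = l.val + 1 ∧ n + 1 ≤ l.val ∧ l.val ≤ 2 * n - 1 ∧ (l.val - n) ∉ J
            then (1 : ℚ) else 0)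
        + (if n ∉ J ∧ k.val = 0 ∧ l.val = 2 * n then (1 : ℚ) else 0)
        - (if n ∉ J ∧ k.val = n ∧ l.val = 0 then (1 : ℚ) else 0))
    (i j : Fin (2 * n + 1)) :
    X i j ≠ 0 ↔ nxt n J i.val = some j.val := by
  subst hX
  simp only [Matrix.of_apply]
  have nA : ∀ (_ : ¬(j.val = i.val + 1 ∧ 1 ≤ i.val ∧ i.val ≤ n - 1 ∧ i.val ∉ J)),
      (if j.val = i.val + 1 ∧ 1 ≤ i.val ∧ i.val ≤ n - 1 ∧ i.val ∉ J then (1 : ℚ) else 0) = 0 :=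
    fun h => if_neg h
  have nB : ∀ (_ : ¬(i.val = j.val + 1 ∧ n + 1 ≤ j.val ∧ j.val ≤ 2 * n - 1 ∧ (j.val - n) ∉ J)),
      (if i.val = j.val + 1 ∧ n + 1 ≤ j.val ∧ j.val ≤ 2 * n - 1 ∧ (j.val - n) ∉ J
        then (1 : ℚ) else 0) = 0 :=
    fun h => if_neg h
  have nC : ∀ (_ : ¬(n ∉ J ∧ i.val = 0 ∧ j.val = 2 * n)),
      (if n ∉ J ∧ i.val = 0 ∧ j.val = 2 * n then (1 : ℚ) else 0) = 0 :=
    fun h => if_neg h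
  have nD : ∀ (_ : ¬(n ∉ J ∧ i.val = n ∧ j.val = 0)),
      (if n ∉ J ∧ i.val = n ∧ j.val = 0 then (1 : ℚ) else 0) = 0 :=
    fun h => if_neg h
  by_cases h1 : 1 ≤ i.val ∧ i.val ≤ n - 1 ∧ i.val ∉ J
  · obtain ⟨a1, a2, a3⟩ := h1
    have hnx : nxt n J i.val = some (i.val + 1) := by
      unfold nxt; rw [if_pos ⟨a1, a2, a3⟩]
    rw [hnx, Option.some_inj,
      nB (by rintro ⟨b1, b2, -, -⟩; omega),
      nC (by rintro ⟨-, b1, -⟩; omega),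
      nD (by rintro ⟨-, b1, -⟩; omega)]
    by_cases hA : j.val = i.val + 1
    · rw [if_pos ⟨hA, a1, a2, a3⟩]; norm_num; omega
    · rw [nA (by rintro ⟨b1, -⟩; exact hA b1)]; norm_num; omega
  · by_cases h2 : n + 2 ≤ i.val ∧ i.val ≤ 2 * n ∧ (i.val - 1 - n) ∉ J
    · obtain ⟨a1, a2, a3⟩ := h2
      have hnx : nxt n J i.val = some (i.val - 1) := by
        unfold nxt; rw [if_neg h1, if_pos ⟨a1, a2, a3⟩]
      rw [hnx, Option.some_inj,
        nA (by rintro ⟨-, -, b1, -⟩; omega),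
        nC (by rintro ⟨-, b1, -⟩; omega),
        nD (by rintro ⟨-, b1, -⟩; omega)]
      by_cases hB : i.val = j.val + 1
      · rw [if_pos ⟨hB, by omega, by omega,
          by rw [show j.val - n = i.val - 1 - n by omega]; exact a3⟩]
        norm_num; omega
      · rw [nB (by rintro ⟨b1, -⟩; exact hB b1)]; norm_num; omega
    · by_cases h3 : n ∉ J ∧ i.val = 0
      · obtain ⟨a1, a2⟩ := h3
        have hnx : nxt n J i.val = some (2 * n) := by
          unfold nxt; rw [if_neg h1, if_neg h2, if_pos ⟨a1, a2⟩]
        rw [hnx, Option.some_inj,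
          nA (by rintro ⟨-, b1, -⟩; omega),
          nB (by rintro ⟨b1, b2, -⟩; omega),
          nD (by rintro ⟨-, b1, -⟩; omega)]
        by_cases hC : j.val = 2 * n
        · rw [if_pos ⟨a1, a2, hC⟩]; norm_num; omega
        · rw [nC (by rintro ⟨-, -, b1⟩; exact hC b1)]; norm_num; omega
      · by_cases h4 : n ∉ J ∧ i.val = n
        · obtain ⟨a1, a2⟩ := h4
          have hnx : nxt n J i.val = some 0 := by
            unfold nxt; rw [if_neg h1, if_neg h2, if_neg h3, if_pos ⟨a1, a2⟩]
          rw [hnx, Option.some_inj,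
            nA (by rintro ⟨-, -, b1, -⟩; omega),
            nB (by rintro ⟨b1, b2, -⟩; omega),
            nC (by rintro ⟨-, b1, -⟩; omega)]
          by_cases hD : j.val = 0
          · rw [if_pos ⟨a1, a2, hD⟩]; norm_num; omega
          · rw [nD (by rintro ⟨-, -, b1⟩; exact hD b1)]; norm_num; omega
        · have hnx : nxt n J i.val = none := by
            unfold nxt; rw [if_neg h1, if_neg h2, if_neg h3, if_neg h4]
          rw [hnx,
            nA (by rintro ⟨-, b1, b2, b3⟩; exact h1 ⟨b1, b2, b3⟩),
            nB (by rintro ⟨b1, b2, b3, b4⟩; exact h2 ⟨by omega, by omega,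
              by rw [show i.val - 1 - n = j.val - n by omega]; exact b4⟩),
            nC (by rintro ⟨b1, b2, -⟩; exact h3 ⟨b1, b2⟩),
            nD (by rintro ⟨b1, b2, -⟩; exact h4 ⟨b1, b2⟩)]
          simp

lemma pow_entry (hn : 2 ≤ n) {X : Matrix (Fin (2 * n + 1)) (Fin (2 * n + 1)) ℚ}
    (hX : X = Matrix.of fun k l : Fin (2 * n + 1) =>
      (if l.val = k.val + 1 ∧ 1 ≤ k.val ∧ k.val ≤ n - 1 ∧ k.val ∉ J then (1 : ℚ) else 0)
        - (if k.val = l.val + 1 ∧ n + 1 ≤ l.val ∧ l.val ≤ 2 * n - 1 ∧ (l.val - n) ∉ J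
            then (1 : ℚ) else 0)
        + (if n ∉ J ∧ k.val = 0 ∧ l.val = 2 * n then (1 : ℚ) else 0)
        - (if n ∉ J ∧ k.val = n ∧ l.val = 0 then (1 : ℚ) else 0)) :
    ∀ (k : ℕ) (i j : Fin (2 * n + 1)),
      (X ^ k) i j ≠ 0 ↔ gg n J k i.val = some j.val := by
  intro k
  induction k with
  | zero =>
    intro i j
    simp only [pow_zero, Matrix.one_apply, gg, Option.some_inj, Fin.val_inj]
    split_ifs with h <;> simp [h]
  | succ k ih =>
    intro i j
    rw [pow_succ', Matrix.mul_apply]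
    cases hnx : nxt n J i.val with
    | none =>
      rw [Finset.sum_eq_zero (fun m _ => ?_)]
      · simp [gg, hnx]
      · rcases eq_or_ne (X i m) 0 with h | h
        · rw [h, zero_mul]
        · exact absurd ((X_entry hn hX i m).mp h) (by rw [hnx]; simp)
    | some y =>
      have hy2 : y ≤ 2 * n := nxt_le hn hnx
      set m0 : Fin (2 * n + 1) := ⟨y, by omega⟩ with hm0
      have hXm0 : X i m0 ≠ 0 := (X_entry hn hX i m0).mpr hnx
      rw [Finset.sum_eq_single m0 ?_ ?_]
      · rw [mul_ne_zero_iff]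
        simp only [gg, hnx, Option.bind_some]
        constructor
        · rintro ⟨-, h⟩; exact (ih m0 j).mp h
        · intro h; exact ⟨hXm0, (ih m0 j).mpr h⟩
      · intro b _ hb
        by_contra hc
        have h1 := (X_entry hn hX i b).mp (mul_ne_zero_iff.mp hc).1
        rw [hnx, Option.some_inj] at h1
        exact hb (Fin.ext h1.symm)
      · intro h; exact absurd (Finset.mem_univ m0) h

end

lemma sum_ind_lt (a b c : ℕ) :
    (∑ x ∈ Finset.Ico a b, if x < c then (1 : ℕ) else 0) = min b c - a := by
  rw [← Finset.card_filter]
  have h : (Finset.Ico a b).filter (fun x => x < c) = Finset.Ico a (min b c) := by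
    ext x; simp only [Finset.mem_filter, Finset.mem_Ico]; omega
  rw [h, Nat.card_Ico]

lemma sum_ind_ge (a b c : ℕ) :
    (∑ x ∈ Finset.Ico a b, if c ≤ x then (1 : ℕ) else 0) = b - max a c := by
  rw [← Finset.card_filter]
  have h : (Finset.Ico a b).filter (fun x => c ≤ x) = Finset.Ico (max a c) b := by
    ext x; simp only [Finset.mem_filter, Finset.mem_Ico]; omega
  rw [h, Nat.card_Ico]

lemma sum_blocks (e : ℕ → ℕ) (r : ℕ) (he : ∀ i j, i ≤ j → j ≤ r → e i ≤ e j) (F : ℕ → ℕ) :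
    ∀ m, m ≤ r → ∑ x ∈ Finset.Ico (e 0) (e m), F x
      = ∑ i ∈ Finset.Icc 1 m, ∑ x ∈ Finset.Ico (e (i - 1)) (e i), F x
  | 0, _ => by simp
  | m + 1, hm => by
    rw [← Finset.sum_Ico_consecutive F (he 0 m (by omega) (by omega))
        (he m (m + 1) (by omega) hm),
      sum_blocks e r he F m (by omega), Finset.sum_Icc_succ_top (by omega)]
    simp

section

variable {n r : ℕ} {d : ℕ → ℕ}

lemma count_eq (hn : 2 ≤ n) (hr : 1 ≤ r) (h0 : d 0 = 0)
    (hmono : ∀ i, i < r → d i < d (i + 1)) (hdn : d r ≤ n) (k : ℕ) :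
    (∑ x ∈ Finset.range (2 * n + 1), if k ≤ ht n r d x then (1 : ℕ) else 0)
      = (2 * (n - d r) + 1 - k) + ((∑ i ∈ Finset.Icc 1 r, (d i - d (i - 1) - k))
        + (∑ i ∈ Finset.Icc 1 r, (d i - d (i - 1) - k))) := by
  have hD1 : 1 ≤ d r := dr_pos hr h0 hmono
  set F : ℕ → ℕ := fun x => if k ≤ ht n r d x then (1 : ℕ) else 0 with hF
  rw [Finset.range_eq_Ico,
    ← Finset.sum_Ico_consecutive F (show (0:ℕ) ≤ 1 by omega) (show 1 ≤ 2*n+1 by omega),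
    ← Finset.sum_Ico_consecutive F (show 1 ≤ d r + 1 by omega)
      (show d r + 1 ≤ 2*n+1 by omega),
    ← Finset.sum_Ico_consecutive F (show d r + 1 ≤ n + 1 by omega)
      (show n + 1 ≤ 2*n+1 by omega),
    ← Finset.sum_Ico_consecutive F (show n + 1 ≤ n + d r + 1 by omega)
      (show n + d r + 1 ≤ 2*n+1 by omega)]
  have e0 : ∑ x ∈ Finset.Ico 0 1, F x = if k ≤ n - d r then 1 else 0 := by
    rw [show Finset.Ico 0 1 = {0} from rfl, Finset.sum_singleton, hF]
    simp only [ht0]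
  have emono : ∀ i j, i ≤ j → j ≤ r → d i + 1 ≤ d j + 1 := by
    intro i j hij hjr; have := d_mono hmono hij hjr; omega
  have e1 : ∑ x ∈ Finset.Ico 1 (d r + 1), F x
      = ∑ i ∈ Finset.Icc 1 r, (d i - d (i - 1) - k) := by
    rw [show Finset.Ico 1 (d r + 1) = Finset.Ico (d 0 + 1) (d r + 1) by rw [h0],
      sum_blocks (fun i => d i + 1) r emono F r le_rfl]
    refine Finset.sum_congr rfl (fun i hi => ?_)
    simp only [Finset.mem_Icc] at hi
    have hd1 : d (i - 1) < d i := d_strict hmono (by omega) hi.2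
    have hdiD : d i ≤ d r := d_mono hmono hi.2 le_rfl
    have hcong : ∀ x ∈ Finset.Ico (d (i - 1) + 1) (d i + 1),
        F x = if x < d i + 1 - k then 1 else 0 := by
      intro x hx
      simp only [Finset.mem_Ico] at hx
      have hidx : idx r d x = i := idx_eq hr h0 hmono (by omega) (by omega)
        (by omega) (by omega)
      have hhtx : ht n r d x = d i - x := by
        rw [htA (by omega) (by omega), hidx]
      rw [hF]
      simp only [hhtx]
      exact if_congr (by omega) rfl rfl
    rw [Finset.sum_congr rfl hcong, sum_ind_lt]
    omega
  have e2 : ∑ x ∈ Finset.Ico (d r + 1) (n + 1), F x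
      = min (n + 1) (2 * n - d r + 2 - k) - (d r + 1) := by
    have hcong : ∀ x ∈ Finset.Ico (d r + 1) (n + 1),
        F x = if x < 2 * n - d r + 2 - k then 1 else 0 := by
      intro x hx
      simp only [Finset.mem_Ico] at hx
      have hhtx : ht n r d x = 2 * n - d r + 1 - x := htB (by omega) (by omega)
      rw [hF]; simp only [hhtx]
      exact if_congr (by omega) rfl rfl
    rw [Finset.sum_congr rfl hcong, sum_ind_lt]
  have emono2 : ∀ i j, i ≤ j → j ≤ r → n + d i + 1 ≤ n + d j + 1 := by
    intro i j hij hjr; have := d_mono hmono hij hjr; omega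
  have e3 : ∑ x ∈ Finset.Ico (n + 1) (n + d r + 1), F x
      = ∑ i ∈ Finset.Icc 1 r, (d i - d (i - 1) - k) := by
    rw [show Finset.Ico (n + 1) (n + d r + 1) = Finset.Ico (n + d 0 + 1) (n + d r + 1) by
        rw [h0],
      sum_blocks (fun i => n + d i + 1) r emono2 F r le_rfl]
    refine Finset.sum_congr rfl (fun i hi => ?_)
    simp only [Finset.mem_Icc] at hi
    have hd1 : d (i - 1) < d i := d_strict hmono (by omega) hi.2
    have hdiD : d i ≤ d r := d_mono hmono hi.2 le_rfl
    have hcong : ∀ x ∈ Finset.Ico (n + d (i - 1) + 1) (n + d i + 1),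
        F x = if n + d (i - 1) + 1 + k ≤ x then 1 else 0 := by
      intro x hx
      simp only [Finset.mem_Ico] at hx
      have hidx : idx r d (x - n) = i := idx_eq hr h0 hmono (by omega) (by omega)
        (by omega) (by omega)
      have hhtx : ht n r d x = (x - n) - d (i - 1) - 1 := by
        rw [htC hdn (by omega) (by omega), hidx]
      rw [hF]; simp only [hhtx]
      exact if_congr (by omega) rfl rfl
    rw [Finset.sum_congr rfl hcong, sum_ind_ge]
    omega
  have e4 : ∑ x ∈ Finset.Ico (n + d r + 1) (2 * n + 1), F x
      = (2 * n + 1) - max (n + d r + 1) (n + d r + 1 + k) := by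
    have hcong : ∀ x ∈ Finset.Ico (n + d r + 1) (2 * n + 1),
        F x = if n + d r + 1 + k ≤ x then 1 else 0 := by
      intro x hx
      simp only [Finset.mem_Ico] at hx
      have hhtx : ht n r d x = x - n - d r - 1 := htD hdn (by omega)
      rw [hF]; simp only [hhtx]
      exact if_congr (by omega) rfl rfl
    rw [Finset.sum_congr rfl hcong, sum_ind_ge]
  rw [e0, e1, e2, e3, e4]
  set S := ∑ i ∈ Finset.Icc 1 r, (d i - d (i - 1) - k)
  split_ifs with h <;> omega

end

lemma col_eq_single {N : ℕ} (M : Matrix (Fin N) (Fin N) ℚ) (f : ℕ → Option ℕ)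
    (hinj : ∀ a b c : ℕ, f a = some c → f b = some c → a = b)
    (h : ∀ i j : Fin N, M i j ≠ 0 ↔ f i.val = some j.val)
    (i j : Fin N) (hij : f i.val = some j.val) :
    M.transpose j = (M i j) • (Pi.single i (1 : ℚ) : Fin N → ℚ) := by
  funext i'
  by_cases hi : i' = i
  · subst hi; simp [Matrix.transpose_apply]
  · simp only [Matrix.transpose_apply, Pi.smul_apply, Pi.single_apply, if_neg hi, smul_zero]
    by_contra hne
    exact hi (Fin.val_injective (hinj i'.val i.val j.val ((h i' j).mp hne) hij))

lemma rank_partial_perm {N : ℕ} (M : Matrix (Fin N) (Fin N) ℚ) (f : ℕ → Option ℕ)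
    (hbd : ∀ i : Fin N, ∀ m, f i.val = some m → m < N)
    (hinj : ∀ a b c : ℕ, f a = some c → f b = some c → a = b)
    (h : ∀ i j : Fin N, M i j ≠ 0 ↔ f i.val = some j.val) :
    M.rank = (Finset.univ.filter (fun i : Fin N => (f i.val).isSome)).card := by
  classical
  set S := Finset.univ.filter (fun i : Fin N => (f i.val).isSome) with hS
  set v : {x // x ∈ S} → (Fin N → ℚ) := fun i => Pi.single i.val (1 : ℚ) with hv
  have hli : LinearIndependent ℚ v := by
    have := (Pi.basisFun ℚ (Fin N)).linearIndependent.comp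
      (fun i : {x // x ∈ S} => i.val) Subtype.val_injective
    convert this using 1
    funext i
    simp [hv, Pi.basisFun_apply]
  have hspan : Submodule.span ℚ (Set.range M.transpose) = Submodule.span ℚ (Set.range v) := by
    apply le_antisymm
    · rw [Submodule.span_le]
      rintro _ ⟨j, rfl⟩
      by_cases hc : ∃ i : Fin N, f i.val = some j.val
      · obtain ⟨i, hi⟩ := hc
        rw [col_eq_single M f hinj h i j hi]
        have hiS : i ∈ S := by simp [hS, Option.isSome_iff_exists, hi]
        exact Submodule.smul_mem _ _ (Submodule.subset_span ⟨⟨i, hiS⟩, rfl⟩)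
      · have : M.transpose j = 0 := by
          funext i'
          by_contra hne
          exact hc ⟨i', (h i' j).mp hne⟩
        rw [this]; exact Submodule.zero_mem _
    · rw [Submodule.span_le]
      rintro _ ⟨⟨i, hiS⟩, rfl⟩
      have hsome : (f i.val).isSome := by simpa [hS] using hiS
      obtain ⟨m, hm⟩ := Option.isSome_iff_exists.mp hsome
      have hmN : m < N := hbd i m hm
      set j : Fin N := ⟨m, hmN⟩ with hj
      have hij : f i.val = some j.val := hm
      have hMne : M i j ≠ 0 := (h i j).mpr hij
      have hcol := col_eq_single M f hinj h i j hij
      have : v ⟨i, hiS⟩ = (M i j)⁻¹ • M.transpose j := by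
        rw [hcol, smul_smul, inv_mul_cancel₀ hMne, one_smul]
      rw [this]
      exact Submodule.smul_mem _ _ (Submodule.subset_span ⟨j, rfl⟩)
  rw [Matrix.rank_eq_finrank_span_cols, show M.col = M.transpose from rfl, hspan, finrank_span_eq_card hli, Fintype.card_coe]

/-- Type `B_n`: the representative
`X_J = Σ_{i ∈ {1,...,n-1} \ J} (E_{i+1,i+2} - E_{n+i+2,n+i+1}) + [n ∉ J](E_{1,2n+1} - E_{n+1,1})`
(1-based indices, realized here 0-based on `Fin (2n+1)`) is nilpotent with Jordan type the
unreduced partition `P_B(J) = [(2(n-d_r)+1) (d_r - d_{r-1})² ... (d_2 - d_1)² d_1²]`. -/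
theorem stmt_6 (n r : ℕ) (hn : 2 ≤ n) (hr : 1 ≤ r)
    (d : ℕ → ℕ) (h0 : d 0 = 0)
    (hmono : ∀ i, i < r → d i < d (i + 1))
    (hdn : d r ≤ n)
    (J : Finset ℕ) (hJ : J = (Finset.Icc 1 r).image d)
    (X : Matrix (Fin (2 * n + 1)) (Fin (2 * n + 1)) ℚ)
    (hX : X = Matrix.of fun k l : Fin (2 * n + 1) =>
      (if l.val = k.val + 1 ∧ 1 ≤ k.val ∧ k.val ≤ n - 1 ∧ k.val ∉ J then (1 : ℚ) else 0)
        - (if k.val = l.val + 1 ∧ n + 1 ≤ l.val ∧ l.val ≤ 2 * n - 1 ∧ (l.val - n) ∉ J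
            then (1 : ℚ) else 0)
        + (if n ∉ J ∧ k.val = 0 ∧ l.val = 2 * n then (1 : ℚ) else 0)
        - (if n ∉ J ∧ k.val = n ∧ l.val = 0 then (1 : ℚ) else 0))
    (D : Multiset ℕ) (hD : D = (Finset.Icc 1 r).val.map fun i => d i - d (i - 1))
    (P : Multiset ℕ) (hP : P = (2 * (n - d r) + 1) ::ₘ (D + D)) :
    IsNilpotent X ∧ ∀ k : ℕ, (X ^ k).rank = (P.map fun p => p - k).sum := by
  constructor
  · refine ⟨2 * n + 1, ?_⟩
    ext i j
    rw [Matrix.zero_apply]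
    by_contra hc
    have h := (pow_entry hn hX (2 * n + 1) i j).mp hc
    have hs : (gg n J (2 * n + 1) i.val).isSome := by rw [h]; rfl
    rw [gg_isSome_iff hn hr h0 hmono hdn hJ (2 * n + 1)
      (show i.val ≤ 2 * n by omega)] at hs
    have := ht_le hr h0 hmono hdn (show i.val ≤ 2 * n by omega)
    omega
  · intro k
    have hrank := rank_partial_perm (X ^ k) (gg n J k)
      (fun i m hm => by
        have := gg_le hn k (show i.val ≤ 2 * n by omega) hm; omega)
      (fun a b c ha hb => gg_inj hn k ha hb)
      (pow_entry hn hX k)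
    rw [hrank, Finset.card_filter,
      Fin.sum_univ_eq_sum_range (fun x => if (gg n J k x).isSome then 1 else 0) (2 * n + 1)]
    have hcong : ∀ x ∈ Finset.range (2 * n + 1),
        (if (gg n J k x).isSome then (1 : ℕ) else 0)
          = (if k ≤ ht n r d x then 1 else 0) := by
      intro x hx
      simp only [Finset.mem_range] at hx
      exact if_congr (gg_isSome_iff hn hr h0 hmono hdn hJ k (by omega)) rfl rfl
    rw [Finset.sum_congr rfl hcong, count_eq hn hr h0 hmono hdn k]
    subst hP hD
    rw [Multiset.map_cons, Multiset.sum_cons, Multiset.map_add, Multiset.sum_add,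
      Multiset.map_map]
    rfl
end

section
/- Let X_J be the 2n×2n matrix over ℚ given by X_J = Σ_{i ∈ {1,...,n-1} \ J} (E_{i, i+1} - E_{n+i+1, n+i}), plus E_{n, 2n} if n ∉ J. Then X_J is nilpotent and for every k ≥ 0, rank(X_J^k) = Σ_{p ∈ P_C(J)} max(p - k, 0); that is, the Jordan type of X_J is the (unreduced) type C_n partition P_C(J) = [2(n-d_r) (d_r - d_{r-1})^2 ... (d_2 - d_1)^2 d_1^2] (the part 2(n - d_r) is omitted when it is zero). -/
open Finset Matrix

namespace Stmt7

def nxt (n : ℕ) (J : Finset ℕ) (a : ℕ) : Option ℕ :=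
  if 1 ≤ a + 1 ∧ a + 1 ≤ n - 1 ∧ a + 1 ∉ J then some (a + 1)
  else if n ∉ J ∧ a = n - 1 then some (2 * n - 1)
  else if n + 1 ≤ a ∧ a ≤ 2 * n - 1 ∧ a - n ∉ J then some (a - 1)
  else none

def nxtIter (n : ℕ) (J : Finset ℕ) : ℕ → ℕ → Option ℕ
  | 0, a => some a
  | k+1, a => (nxt n J a).bind (nxtIter n J k)

noncomputable def life (n : ℕ) (J : Finset ℕ) (a : ℕ) : ℕ :=
  if a < n then
    if h : (J.filter (a < ·)).Nonempty then (J.filter (a < ·)).min' h - 1 - a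
    else 2 * n - 1 - a - (J.sup id)
  else a - n - ((J.filter (· ≤ a - n)).sup id)

structure Ctx (n r : ℕ) (d : ℕ → ℕ) (J : Finset ℕ) : Prop where
  hn : 2 ≤ n
  hr : 1 ≤ r
  h0 : d 0 = 0
  hmono : ∀ i, i < r → d i < d (i + 1)
  hdn : d r ≤ n
  hJ : J = (Finset.Icc 1 r).image d

variable {n r : ℕ} {d : ℕ → ℕ} {J : Finset ℕ}

lemma Ctx.dmono (C : Ctx n r d J) : ∀ i j, i ≤ j → j ≤ r → d i ≤ d j := by
  intro i j hij hjr
  induction j with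
  | zero => simp [Nat.le_zero.mp hij]
  | succ m ih =>
    rcases Nat.lt_or_ge i (m + 1) with h | h
    · have := C.hmono m (by omega)
      have := ih (by omega) (by omega)
      omega
    · have h' : i = m + 1 := by omega
      subst h'
      exact le_refl _

lemma Ctx.memJ (C : Ctx n r d J) (x : ℕ) :
    x ∈ J ↔ ∃ i, 1 ≤ i ∧ i ≤ r ∧ d i = x := by
  rw [C.hJ]
  simp only [Finset.mem_image, Finset.mem_Icc]
  tauto

lemma Ctx.Jle (C : Ctx n r d J) {x : ℕ} (hx : x ∈ J) : 1 ≤ x ∧ x ≤ d r := by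
  rw [C.memJ] at hx
  obtain ⟨i, hi1, hir, rfl⟩ := hx
  constructor
  · have := C.dmono 1 i hi1 hir
    have : d 0 < d 1 := C.hmono 0 (by omega)
    have := C.h0
    omega
  · exact C.dmono i r hir le_rfl

lemma Ctx.drJ (C : Ctx n r d J) : d r ∈ J := by
  rw [C.memJ]; exact ⟨r, C.hr, le_rfl, rfl⟩

lemma Ctx.supJ (C : Ctx n r d J) : J.sup id = d r := by
  apply le_antisymm
  · exact Finset.sup_le fun x hx => (C.Jle hx).2
  · exact Finset.le_sup (f := id) C.drJ


lemma Ctx.min_seg (C : Ctx n r d J) {i a : ℕ} (hi1 : 1 ≤ i) (hir : i ≤ r)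
    (ha1 : d (i - 1) ≤ a) (ha2 : a < d i) :
    ∃ h : (J.filter (a < ·)).Nonempty, (J.filter (a < ·)).min' h = d i := by
  have hdi : d i ∈ J.filter (a < ·) := by
    simp only [Finset.mem_filter]
    exact ⟨(C.memJ _).2 ⟨i, hi1, hir, rfl⟩, ha2⟩
  refine ⟨⟨_, hdi⟩, le_antisymm (Finset.min'_le _ _ hdi) ?_⟩
  apply Finset.le_min'
  intro y hy
  simp only [Finset.mem_filter] at hy
  obtain ⟨hyJ, hya⟩ := hy
  obtain ⟨j, hj1, hjr, rfl⟩ := (C.memJ _).1 hyJ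
  by_contra hlt
  push_neg at hlt
  have : d j ≤ d (i - 1) := C.dmono j (i - 1) (by
    by_contra hji
    push_neg at hji
    have := C.dmono i j (by omega) hjr
    omega) (by omega)
  omega

lemma Ctx.filter_gt_empty (C : Ctx n r d J) {a : ℕ} (ha : d r ≤ a) :
    J.filter (a < ·) = ∅ := by
  rw [Finset.filter_eq_empty_iff]
  intro x hx
  have := (C.Jle hx).2
  omega

lemma Ctx.life_top_seg (C : Ctx n r d J) {i a : ℕ} (hi1 : 1 ≤ i) (hir : i ≤ r)
    (ha1 : d (i - 1) ≤ a) (ha2 : a < d i) :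
    life n J a = d i - 1 - a := by
  obtain ⟨h, hmin⟩ := C.min_seg hi1 hir ha1 ha2
  have han : a < n := lt_of_lt_of_le ha2 (le_trans (C.dmono i r hir le_rfl) C.hdn)
  rw [life, if_pos han, dif_pos h, hmin]

lemma Ctx.life_top_tail (C : Ctx n r d J) {a : ℕ} (ha1 : d r ≤ a) (ha2 : a < n) :
    life n J a = 2 * n - 1 - a - d r := by
  have he : ¬ (J.filter (a < ·)).Nonempty := by
    rw [C.filter_gt_empty ha1]; simp
  rw [life, if_pos ha2, dif_neg he, C.supJ]

lemma Ctx.sup_seg (C : Ctx n r d J) {i t : ℕ} (hi1 : 1 ≤ i) (hir : i ≤ r)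
    (ht1 : d (i - 1) ≤ t) (ht2 : t < d i) :
    (J.filter (· ≤ t)).sup id = d (i - 1) := by
  apply le_antisymm
  · apply Finset.sup_le
    intro x hx
    simp only [Finset.mem_filter] at hx
    obtain ⟨hxJ, hxt⟩ := hx
    obtain ⟨j, hj1, hjr, rfl⟩ := (C.memJ _).1 hxJ
    simp only [id]
    apply C.dmono j (i - 1) ?_ (by omega)
    by_contra hji
    push_neg at hji
    have := C.dmono i j (by omega) hjr
    omega
  · rcases Nat.eq_or_lt_of_le hi1 with h1 | h1
    · simp only [← h1]
      simp [C.h0]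
    · apply Finset.le_sup (f := id)
      simp only [Finset.mem_filter]
      exact ⟨(C.memJ _).2 ⟨i - 1, by omega, by omega, rfl⟩, ht1⟩

lemma Ctx.sup_tail (C : Ctx n r d J) {t : ℕ} (ht : d r ≤ t) :
    (J.filter (· ≤ t)).sup id = d r := by
  apply le_antisymm
  · apply Finset.sup_le
    intro x hx
    simp only [Finset.mem_filter] at hx
    exact (C.Jle hx.1).2
  · apply Finset.le_sup (f := id)
    simp only [Finset.mem_filter]
    exact ⟨C.drJ, ht⟩

lemma Ctx.life_bot_seg (C : Ctx n r d J) {i t : ℕ} (hi1 : 1 ≤ i) (hir : i ≤ r)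
    (ht1 : d (i - 1) ≤ t) (ht2 : t < d i) :
    life n J (n + t) = t - d (i - 1) := by
  have hn : ¬ (n + t < n) := by omega
  rw [life, if_neg hn]
  have : n + t - n = t := by omega
  rw [this, C.sup_seg hi1 hir ht1 ht2]

lemma Ctx.life_bot_tail (C : Ctx n r d J) {t : ℕ} (ht : d r ≤ t) :
    life n J (n + t) = t - d r := by
  have hn : ¬ (n + t < n) := by omega
  rw [life, if_neg hn]
  have : n + t - n = t := by omega
  rw [this, C.sup_tail ht]


lemma nxt_lt {a b : ℕ} (ha : a < 2 * n) (h : nxt n J a = some b) : b < 2 * n := by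
  unfold nxt at h
  split_ifs at h with h1 h2 h3 <;> simp only [Option.some.injEq] at h <;> omega

lemma nxt_inj {a a' b : ℕ} (h : nxt n J a = some b) (h' : nxt n J a' = some b) :
    a = a' := by
  unfold nxt at h h'
  split_ifs at h with h1 h2 h3 <;> split_ifs at h' with g1 g2 g3 <;>
    simp only [Option.some.injEq] at h h' <;> omega

lemma nxtIter_lt {k a c : ℕ} (ha : a < 2 * n) (h : nxtIter n J k a = some c) :
    c < 2 * n := by
  induction k generalizing a with
  | zero =>
    simp only [nxtIter, Option.some.injEq] at h
    omega
  | succ k ih =>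
    rw [nxtIter] at h
    cases hnx : nxt n J a with
    | none => rw [hnx] at h; simp at h
    | some b =>
      rw [hnx, Option.bind_some] at h
      exact ih (nxt_lt ha hnx) h

lemma nxtIter_inj (k : ℕ) {a a' c : ℕ} (h : nxtIter n J k a = some c)
    (h' : nxtIter n J k a' = some c) : a = a' := by
  induction k generalizing a a' with
  | zero =>
    simp only [nxtIter, Option.some.injEq] at h h'
    omega
  | succ k ih =>
    rw [nxtIter] at h h'
    cases hnx : nxt n J a with
    | none => rw [hnx] at h; simp at h
    | some b =>
      cases hnx' : nxt n J a' with
      | none => rw [hnx'] at h'; simp at h'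
      | some b' =>
        rw [hnx, Option.bind_some] at h; rw [hnx', Option.bind_some] at h'
        have := ih h h'
        subst this
        exact nxt_inj hnx hnx'

lemma Ctx.dprev (C : Ctx n r d J) {i : ℕ} (hi1 : 1 ≤ i) (hir : i ≤ r) :
    d (i - 1) < d i := by
  have h := C.hmono (i - 1) (by omega)
  have : i - 1 + 1 = i := by omega
  rwa [this] at h

lemma Ctx.nxt_life (C : Ctx n r d J) {a b : ℕ} (ha : a < 2 * n)
    (h : nxt n J a = some b) : life n J a = life n J b + 1 := by
  have hn2 := C.hn
  have hdrn := C.hdn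
  unfold nxt at h
  split_ifs at h with h1 h2 h3 <;> simp only [Option.some.injEq] at h <;> subst h
  · -- top move: b = a + 1
    obtain ⟨-, hle, hnotJ⟩ := h1
    have hset : J.filter (a + 1 < ·) = J.filter (a < ·) := by
      ext x
      simp only [Finset.mem_filter]
      constructor
      · rintro ⟨hx, hlt⟩; exact ⟨hx, by omega⟩
      · rintro ⟨hx, hlt⟩
        have hx' : x ≠ a + 1 := fun e => hnotJ (e ▸ hx)
        exact ⟨hx, by omega⟩
    rw [life, life, if_pos (by omega), if_pos (by omega), hset]
    by_cases hne : (J.filter (a < ·)).Nonempty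
    · rw [dif_pos hne, dif_pos hne]
      set m := (J.filter (a < ·)).min' hne with hm
      have hmem := Finset.min'_mem _ hne
      rw [← hm] at hmem
      simp only [Finset.mem_filter] at hmem
      have hm1 : m ≠ a + 1 := fun e => hnotJ (e ▸ hmem.1)
      have hm2 : a + 2 ≤ m := by omega
      omega
    · rw [dif_neg hne, dif_neg hne]
      have hdr : d r ≤ a := by
        by_contra hc
        push_neg at hc
        exact hne ⟨d r, by simp only [Finset.mem_filter]; exact ⟨C.drJ, hc⟩⟩
      rw [C.supJ]
      omega
  · -- connector: a = n - 1, b = 2 * n - 1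
    obtain ⟨hnJ, ha'⟩ := h2
    have hdr : d r ≠ n := fun h => hnJ (h ▸ C.drJ)
    have e1 : life n J a = 2 * n - 1 - a - d r :=
      C.life_top_tail (by omega) (by omega)
    have e2 : life n J (2 * n - 1) = (n - 1) - d r := by
      have : 2 * n - 1 = n + (n - 1) := by omega
      rw [this, C.life_bot_tail (by omega)]
    rw [e1, e2]
    omega
  · -- bottom move: b = a - 1
    obtain ⟨hge, hle, hnotJ⟩ := h3
    rw [life, life, if_neg (by omega), if_neg (by omega)]
    have hset : J.filter (· ≤ a - 1 - n) = J.filter (· ≤ a - n) := by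
      ext x
      simp only [Finset.mem_filter]
      constructor
      · rintro ⟨hx, hlt⟩; exact ⟨hx, by omega⟩
      · rintro ⟨hx, hlt⟩
        have hx' : x ≠ a - n := fun e => hnotJ (e ▸ hx)
        exact ⟨hx, by omega⟩
    rw [hset]
    have hsup : (J.filter (· ≤ a - n)).sup id ≤ a - n - 1 := by
      apply Finset.sup_le
      intro x hx
      simp only [Finset.mem_filter] at hx
      obtain ⟨hxJ, hxle⟩ := hx
      have : x ≠ a - n := fun h => hnotJ (h ▸ hxJ)
      simp only [id]
      omega
    omega

lemma Ctx.nxt_none_life (C : Ctx n r d J) {a : ℕ} (ha : a < 2 * n)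
    (h : nxt n J a = none) : life n J a = 0 := by
  have hn2 := C.hn
  have hdrn := C.hdn
  unfold nxt at h
  split_ifs at h with h1 h2 h3
  push_neg at h1 h2 h3
  rcases Nat.lt_or_ge a n with han | han
  · rcases Nat.lt_or_ge (a + 1) n with h' | h'
    · -- a + 1 ≤ n - 1, so a + 1 ∈ J
      have hmem : a + 1 ∈ J := h1 (by omega) (by omega)
      obtain ⟨i, hi1, hir, hdi⟩ := (C.memJ _).1 hmem
      have := C.dprev hi1 hir
      have e := C.life_top_seg (a := a) hi1 hir (by omega) (by omega)
      omega
    · -- a = n - 1, n ∈ J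
      have ha' : a = n - 1 := by omega
      have hnJ : n ∈ J := by
        by_contra hc
        exact absurd ha' (h2 hc)
      have hdr : d r = n := le_antisymm hdrn (C.Jle hnJ).2
      have := C.dprev C.hr le_rfl
      have e := C.life_top_seg (i := r) (a := a) C.hr le_rfl (by omega) (by omega)
      omega
  · rcases Nat.eq_or_lt_of_le han with h' | h'
    · -- a = n
      rw [life, if_neg (by omega)]
      have : a - n = 0 := by omega
      rw [this]
      omega
    · -- n + 1 ≤ a ≤ 2n - 1, a - n ∈ J
      have hmem : a - n ∈ J := h3 (by omega) (by omega)
      have hsup : a - n ≤ (J.filter (· ≤ a - n)).sup id := by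
        apply Finset.le_sup (f := id)
        simp only [Finset.mem_filter]
        exact ⟨hmem, le_rfl⟩
      rw [life, if_neg (by omega)]
      omega

lemma Ctx.life_lt (C : Ctx n r d J) {a : ℕ} (ha : a < 2 * n) :
    life n J a < 2 * n := by
  have hn2 := C.hn
  rw [life]
  split_ifs with h1 h2
  · have hmem := Finset.min'_mem _ h2
    simp only [Finset.mem_filter] at hmem
    have := (C.Jle hmem.1).2
    have := C.hdn
    omega
  · omega
  · omega

lemma Ctx.alive_iff (C : Ctx n r d J) (k : ℕ) :
    ∀ a, a < 2 * n → ((nxtIter n J k a).isSome ↔ k ≤ life n J a) := by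
  induction k with
  | zero => intro a ha; simp [nxtIter]
  | succ k ih =>
    intro a ha
    rw [nxtIter]
    cases hnx : nxt n J a with
    | none =>
      have := C.nxt_none_life ha hnx
      rw [Option.bind_none]
      simp only [Option.isSome_none]
      constructor
      · intro hc; simp at hc
      · intro hc; omega
    | some b =>
      rw [Option.bind_some, ih b (nxt_lt ha hnx), C.nxt_life ha hnx]
      omega


lemma Ctx.cnt_top_seg (C : Ctx n r d J) (k : ℕ) {i : ℕ} (hi1 : 1 ≤ i) (hir : i ≤ r) :
    ((Ico (d (i - 1)) (d i)).filter (fun a => k ≤ life n J a)).card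
      = d i - d (i - 1) - k := by
  have hcong : ∀ a ∈ Ico (d (i - 1)) (d i), (k ≤ life n J a ↔ a < d i - k) := by
    intro a ha
    rw [mem_Ico] at ha
    rw [C.life_top_seg hi1 hir ha.1 ha.2]
    omega
  rw [filter_congr hcong, Finset.Ico_filter_lt, Nat.card_Ico]
  omega

lemma Ctx.cnt_top_tail (C : Ctx n r d J) (k : ℕ) :
    ((Ico (d r) n).filter (fun a => k ≤ life n J a)).card
      = min n (2 * n - d r - k) - d r := by
  have hcong : ∀ a ∈ Ico (d r) n, (k ≤ life n J a ↔ a < 2 * n - d r - k) := by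
    intro a ha
    rw [mem_Ico] at ha
    rw [C.life_top_tail ha.1 ha.2]
    have := C.hdn
    omega
  rw [filter_congr hcong, Finset.Ico_filter_lt, Nat.card_Ico]

lemma Ctx.cnt_bot_seg (C : Ctx n r d J) (k : ℕ) {i : ℕ} (hi1 : 1 ≤ i) (hir : i ≤ r) :
    ((Ico (n + d (i - 1)) (n + d i)).filter (fun a => k ≤ life n J a)).card
      = d i - d (i - 1) - k := by
  have hcong : ∀ a ∈ Ico (n + d (i - 1)) (n + d i),
      (k ≤ life n J a ↔ n + d (i - 1) + k ≤ a) := by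
    intro a ha
    rw [mem_Ico] at ha
    have ea : a = n + (a - n) := by omega
    rw [ea, C.life_bot_seg hi1 hir (by omega) (by omega)]
    omega
  rw [filter_congr hcong, Finset.Ico_filter_le, Nat.card_Ico]
  omega

lemma Ctx.cnt_bot_tail (C : Ctx n r d J) (k : ℕ) :
    ((Ico (n + d r) (2 * n)).filter (fun a => k ≤ life n J a)).card
      = (n - d r) - k := by
  have hcong : ∀ a ∈ Ico (n + d r) (2 * n),
      (k ≤ life n J a ↔ n + d r + k ≤ a) := by
    intro a ha
    rw [mem_Ico] at ha
    have ea : a = n + (a - n) := by omega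
    rw [ea, C.life_bot_tail (by omega)]
    omega
  rw [filter_congr hcong, Finset.Ico_filter_le, Nat.card_Ico]
  omega

lemma Ctx.cnt_top (C : Ctx n r d J) (k : ℕ) :
    ∀ m, m ≤ r → ((range (d m)).filter (fun a => k ≤ life n J a)).card
      = ∑ i ∈ Icc 1 m, (d i - d (i - 1) - k) := by
  intro m
  induction m with
  | zero => intro _; rw [C.h0]; simp
  | succ m ih =>
    intro hm
    have hsplit : range (d (m + 1)) = range (d m) ∪ Ico (d m) (d (m + 1)) := by
      rw [range_eq_Ico, range_eq_Ico]
      exact (Finset.Ico_union_Ico_eq_Ico (Nat.zero_le _)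
        (C.dmono m (m + 1) (by omega) hm)).symm
    have hdisj : Disjoint (range (d m)) (Ico (d m) (d (m + 1))) := by
      rw [range_eq_Ico]
      exact Finset.Ico_disjoint_Ico_consecutive 0 (d m) (d (m + 1))
    rw [hsplit, filter_union, card_union_of_disjoint (Finset.disjoint_filter_filter hdisj),
      ih (by omega), Finset.sum_Icc_succ_top (by omega : 1 ≤ m + 1)]
    have := C.cnt_top_seg k (i := m + 1) (by omega) hm
    simp only [Nat.add_sub_cancel] at this
    rw [this]
    simp

lemma Ctx.cnt_bot (C : Ctx n r d J) (k : ℕ) :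
    ∀ m, m ≤ r → ((Ico n (n + d m)).filter (fun a => k ≤ life n J a)).card
      = ∑ i ∈ Icc 1 m, (d i - d (i - 1) - k) := by
  intro m
  induction m with
  | zero => intro _; rw [C.h0]; simp
  | succ m ih =>
    intro hm
    have hsplit : Ico n (n + d (m + 1))
        = Ico n (n + d m) ∪ Ico (n + d m) (n + d (m + 1)) := by
      exact (Finset.Ico_union_Ico_eq_Ico (by omega)
        (by have := C.dmono m (m + 1) (by omega) hm; omega)).symm
    rw [hsplit, filter_union, card_union_of_disjoint (Finset.disjoint_filter_filter
      (Finset.Ico_disjoint_Ico_consecutive n (n + d m) (n + d (m + 1)))),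
      ih (by omega), Finset.sum_Icc_succ_top (by omega : 1 ≤ m + 1)]
    have := C.cnt_bot_seg k (i := m + 1) (by omega) hm
    simp only [Nat.add_sub_cancel] at this
    rw [this]
    simp

lemma Ctx.count_eq (C : Ctx n r d J) (k : ℕ) :
    ((range (2 * n)).filter (fun a => k ≤ life n J a)).card
      = (2 * (n - d r) - k) + 2 * ∑ i ∈ Icc 1 r, (d i - d (i - 1) - k) := by
  have hdn := C.hdn
  have hn2 := C.hn
  have c3 : ((Ico 0 (2 * n)).filter (fun a => k ≤ life n J a)).card
      = ((Ico 0 (n + d r)).filter (fun a => k ≤ life n J a)).card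
        + ((Ico (n + d r) (2 * n)).filter (fun a => k ≤ life n J a)).card := by
    have h := Finset.Ico_union_Ico_eq_Ico (Nat.zero_le (n + d r))
      (show n + d r ≤ 2 * n by omega)
    rw [← h, filter_union, card_union_of_disjoint (Finset.disjoint_filter_filter
      (Finset.Ico_disjoint_Ico_consecutive 0 (n + d r) (2 * n)))]
  have c2 : ((Ico 0 (n + d r)).filter (fun a => k ≤ life n J a)).card
      = ((Ico 0 n).filter (fun a => k ≤ life n J a)).card
        + ((Ico n (n + d r)).filter (fun a => k ≤ life n J a)).card := by
    have h := Finset.Ico_union_Ico_eq_Ico (Nat.zero_le n)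
      (show n ≤ n + d r by omega)
    rw [← h, filter_union, card_union_of_disjoint (Finset.disjoint_filter_filter
      (Finset.Ico_disjoint_Ico_consecutive 0 n (n + d r)))]
  have c1 : ((Ico 0 n).filter (fun a => k ≤ life n J a)).card
      = ((Ico 0 (d r)).filter (fun a => k ≤ life n J a)).card
        + ((Ico (d r) n).filter (fun a => k ≤ life n J a)).card := by
    have h := Finset.Ico_union_Ico_eq_Ico (Nat.zero_le (d r)) hdn
    rw [← h, filter_union, card_union_of_disjoint (Finset.disjoint_filter_filter
      (Finset.Ico_disjoint_Ico_consecutive 0 (d r) n))]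
  have etop : ((Ico 0 (d r)).filter (fun a => k ≤ life n J a)).card
      = ∑ i ∈ Icc 1 r, (d i - d (i - 1) - k) := by
    rw [← range_eq_Ico]
    exact C.cnt_top k r le_rfl
  rw [range_eq_Ico, c3, c2, c1, etop, C.cnt_top_tail k, C.cnt_bot k r le_rfl,
    C.cnt_bot_tail k]
  omega


section MatrixPart

variable {n : ℕ} {J : Finset ℕ} {X : Matrix (Fin (2 * n)) (Fin (2 * n)) ℚ}

def XOK (n : ℕ) (J : Finset ℕ) (X : Matrix (Fin (2 * n)) (Fin (2 * n)) ℚ) : Prop :=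
  X = Matrix.of fun k l : Fin (2 * n) =>
      (if l.val = k.val + 1 ∧ 1 ≤ l.val ∧ l.val ≤ n - 1 ∧ l.val ∉ J then (1 : ℚ) else 0)
        - (if k.val = l.val + 1 ∧ n + 1 ≤ k.val ∧ k.val ≤ 2 * n - 1 ∧ (k.val - n) ∉ J
            then (1 : ℚ) else 0)
        + (if n ∉ J ∧ k.val = n - 1 ∧ l.val = 2 * n - 1 then (1 : ℚ) else 0)

lemma entry_of_ne (hn : 2 ≤ n) (hX : XOK n J X)
    {i j : Fin (2 * n)} (h : nxt n J i.val ≠ some j.val) : X i j = 0 := by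
  have hi := i.isLt
  have hj := j.isLt
  rw [hX]
  simp only [Matrix.of_apply]
  unfold nxt at h
  split_ifs at h with h1 h2 h3
  · rw [Ne, Option.some.injEq] at h
    split_ifs with g1 g2 g3 <;> first | (exfalso; omega) | norm_num
  · rw [Ne, Option.some.injEq] at h
    split_ifs with g1 g2 g3 <;> first | (exfalso; omega) | norm_num
  · rw [Ne, Option.some.injEq] at h
    split_ifs with g1 g2 g3 <;> first | (exfalso; omega) | norm_num
  · -- all branches fail
    have hg1 : ¬(j.val = i.val + 1 ∧ 1 ≤ j.val ∧ j.val ≤ n - 1 ∧ j.val ∉ J) := by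
      rintro ⟨e1, e2, e3, e4⟩
      apply e4
      rw [e1]
      by_contra hc
      exact h1 ⟨by omega, by omega, hc⟩
    have hg2 : ¬(i.val = j.val + 1 ∧ n + 1 ≤ i.val ∧ i.val ≤ 2 * n - 1 ∧ (i.val - n) ∉ J) := by
      rintro ⟨e1, e2, e3, e4⟩
      exact h3 ⟨e2, e3, e4⟩
    have hg3 : ¬(n ∉ J ∧ i.val = n - 1 ∧ j.val = 2 * n - 1) := by
      rintro ⟨e1, e2, e3⟩
      exact h2 ⟨e1, e2⟩
    rw [if_neg hg1, if_neg hg2, if_neg hg3]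
    norm_num

lemma entry_of_eq (hn : 2 ≤ n) (hX : XOK n J X)
    {i j : Fin (2 * n)} (h : nxt n J i.val = some j.val) :
    X i j = 1 ∨ X i j = -1 := by
  have hi := i.isLt
  have hj := j.isLt
  rw [hX]
  simp only [Matrix.of_apply]
  unfold nxt at h
  split_ifs at h with h1 h2 h3 <;> rw [Option.some.injEq] at h
  · left
    obtain ⟨-, h1b, h1c⟩ := h1
    have hg1 : j.val = i.val + 1 ∧ 1 ≤ j.val ∧ j.val ≤ n - 1 ∧ j.val ∉ J :=
      ⟨by omega, by omega, by omega, by rw [← h]; exact h1c⟩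
    have hg2 : ¬(i.val = j.val + 1 ∧ n + 1 ≤ i.val ∧ i.val ≤ 2 * n - 1 ∧ (i.val - n) ∉ J) := by
      rintro ⟨e1, e2, -, -⟩; omega
    have hg3 : ¬(n ∉ J ∧ i.val = n - 1 ∧ j.val = 2 * n - 1) := by
      rintro ⟨-, e2, -⟩; omega
    rw [if_pos hg1, if_neg hg2, if_neg hg3]
    norm_num
  · left
    obtain ⟨h2a, h2b⟩ := h2
    have hg3 : n ∉ J ∧ i.val = n - 1 ∧ j.val = 2 * n - 1 := ⟨h2a, h2b, by omega⟩
    have hg1 : ¬(j.val = i.val + 1 ∧ 1 ≤ j.val ∧ j.val ≤ n - 1 ∧ j.val ∉ J) := by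
      rintro ⟨e1, -, e3, -⟩; omega
    have hg2 : ¬(i.val = j.val + 1 ∧ n + 1 ≤ i.val ∧ i.val ≤ 2 * n - 1 ∧ (i.val - n) ∉ J) := by
      rintro ⟨-, e2, -, -⟩; omega
    rw [if_neg hg1, if_neg hg2, if_pos hg3]
    norm_num
  · right
    obtain ⟨h3a, h3b, h3c⟩ := h3
    have hg2 : i.val = j.val + 1 ∧ n + 1 ≤ i.val ∧ i.val ≤ 2 * n - 1 ∧ (i.val - n) ∉ J :=
      ⟨by omega, h3a, h3b, h3c⟩
    have hg1 : ¬(j.val = i.val + 1 ∧ 1 ≤ j.val ∧ j.val ≤ n - 1 ∧ j.val ∉ J) := by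
      rintro ⟨e1, -, e3, -⟩; omega
    have hg3 : ¬(n ∉ J ∧ i.val = n - 1 ∧ j.val = 2 * n - 1) := by
      rintro ⟨-, e2, -⟩; omega
    rw [if_neg hg1, if_pos hg2, if_neg hg3]
    norm_num

lemma pow_entry (hn : 2 ≤ n) (hX : XOK n J X) (k : ℕ) (i j : Fin (2 * n)) :
    (nxtIter n J k i.val = some j.val → ((X ^ k) i j = 1 ∨ (X ^ k) i j = -1)) ∧
    (nxtIter n J k i.val ≠ some j.val → (X ^ k) i j = 0) := by
  induction k generalizing i j with
  | zero =>
    simp only [nxtIter, pow_zero, Matrix.one_apply, Option.some.injEq]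
    constructor
    · intro h
      rw [if_pos (Fin.ext h)]
      left; rfl
    · intro h
      rw [if_neg (fun e => h (by rw [e]))]
  | succ k ih =>
    rw [pow_succ']
    cases hnx : nxt n J i.val with
    | none =>
      have hz : (X * X ^ k) i j = 0 := by
        rw [Matrix.mul_apply]
        apply Finset.sum_eq_zero
        intro m _
        rw [entry_of_ne hn hX (by rw [hnx]; exact fun e => nomatch e), zero_mul]
      have hiter : nxtIter n J (k + 1) i.val = none := by
        rw [nxtIter, hnx, Option.bind_none]
      rw [hiter]
      exact ⟨fun h => (nomatch h), fun _ => hz⟩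
    | some b =>
      have hb : b < 2 * n := nxt_lt i.isLt hnx
      have hsum : (X * X ^ k) i j = X i ⟨b, hb⟩ * (X ^ k) ⟨b, hb⟩ j := by
        rw [Matrix.mul_apply]
        apply Finset.sum_eq_single
        · intro m _ hm
          have : nxt n J i.val ≠ some m.val := by
            rw [hnx]
            intro e
            rw [Option.some.injEq] at e
            exact hm (Fin.ext e.symm)
          rw [entry_of_ne hn hX this, zero_mul]
        · intro hmem
          exact absurd (Finset.mem_univ _) hmem
      have hiter : nxtIter n J (k + 1) i.val = nxtIter n J k b := by
        rw [nxtIter, hnx, Option.bind_some]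
      have hXib : X i ⟨b, hb⟩ = 1 ∨ X i ⟨b, hb⟩ = -1 := entry_of_eq hn hX hnx
      rw [hiter]
      constructor
      · intro h
        have h2 := (ih ⟨b, hb⟩ j).1 h
        rw [hsum]
        rcases hXib with e1 | e1 <;> rcases h2 with e2 | e2 <;> rw [e1, e2] <;> norm_num
      · intro h
        rw [hsum, (ih ⟨b, hb⟩ j).2 h, mul_zero]


lemma mul_transpose_eq (hn : 2 ≤ n) (hX : XOK n J X) (k : ℕ) :
    X ^ k * (X ^ k)ᵀ = Matrix.diagonal
      (fun i : Fin (2 * n) => if (nxtIter n J k i.val).isSome then (1 : ℚ) else 0) := by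
  ext i i'
  rw [Matrix.mul_apply]
  simp only [Matrix.transpose_apply]
  cases hni : nxtIter n J k i.val with
  | none =>
    have hz : ∀ j, (X ^ k) i j = 0 := fun j =>
      (pow_entry hn hX k i j).2 (by rw [hni]; exact fun e => nomatch e)
    rw [Finset.sum_eq_zero (fun j _ => by rw [hz j, zero_mul])]
    rw [Matrix.diagonal_apply]
    split_ifs with he hs
    · rw [hni] at hs
      simp at hs
    · rfl
    · rfl
  | some b =>
    have hb : b < 2 * n := nxtIter_lt i.isLt hni
    by_cases he : i = i'
    · subst he
      have hsum : ∑ j, (X ^ k) i j * (X ^ k) i j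
          = (X ^ k) i ⟨b, hb⟩ * (X ^ k) i ⟨b, hb⟩ := by
        apply Finset.sum_eq_single
        · intro m _ hm
          have : nxtIter n J k i.val ≠ some m.val := by
            rw [hni]
            intro e
            rw [Option.some.injEq] at e
            exact hm (Fin.ext e.symm)
          rw [(pow_entry hn hX k i m).2 this, zero_mul]
        · intro hmem
          exact absurd (Finset.mem_univ _) hmem
      rw [hsum, Matrix.diagonal_apply_eq, hni]
      rcases (pow_entry hn hX k i ⟨b, hb⟩).1 (by rw [hni]) with h1 | h1 <;> rw [h1] <;> norm_num
    · rw [Matrix.diagonal_apply_ne _ he]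
      cases hni' : nxtIter n J k i'.val with
      | none =>
        apply Finset.sum_eq_zero
        intro j _
        rw [(pow_entry hn hX k i' j).2 (by rw [hni']; exact fun e => nomatch e),
          mul_zero]
      | some b' =>
        have hbb : b ≠ b' := by
          intro e
          subst e
          exact he (Fin.ext (nxtIter_inj k hni hni'))
        apply Finset.sum_eq_zero
        intro j _
        by_cases hjb : j.val = b
        · rw [(pow_entry hn hX k i' j).2 (by
            rw [hni']
            intro e
            rw [Option.some.injEq] at e
            exact hbb (by omega)), mul_zero]
        · rw [(pow_entry hn hX k i j).2 (by
            rw [hni]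
            intro e
            rw [Option.some.injEq] at e
            exact hjb e.symm), zero_mul]

lemma rank_pow_eq_card (hn : 2 ≤ n) (hX : XOK n J X) (k : ℕ) :
    (X ^ k).rank
      = ((Finset.range (2 * n)).filter (fun a => (nxtIter n J k a).isSome)).card := by
  rw [← Matrix.rank_self_mul_transpose, mul_transpose_eq hn hX k, Matrix.rank_diagonal]
  rw [Fintype.card_subtype]
  have himg : ((Finset.univ : Finset (Fin (2 * n))).filter
        (fun i => (if (nxtIter n J k i.val).isSome then (1 : ℚ) else 0) ≠ 0)).image Fin.val
      = (Finset.range (2 * n)).filter (fun a => (nxtIter n J k a).isSome) := by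
    ext a
    simp only [Finset.mem_image, Finset.mem_filter, Finset.mem_univ, true_and,
      Finset.mem_range, ne_eq, ite_eq_right_iff, one_ne_zero, imp_false, not_not]
    constructor
    · rintro ⟨i, hi, rfl⟩
      exact ⟨i.isLt, by simpa using hi⟩
    · rintro ⟨ha, hs⟩
      exact ⟨⟨a, ha⟩, by simpa using hs, rfl⟩
  rw [← himg, Finset.card_image_of_injective _ Fin.val_injective]

end MatrixPart

end Stmt7

/-- Type `C_n`: the representative
`X_J = Σ_{i ∈ {1,...,n-1} \ J} (E_{i,i+1} - E_{n+i+1,n+i}) + [n ∉ J] E_{n,2n}`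
(1-based indices, realized here 0-based on `Fin (2n)`) is nilpotent with Jordan type the
unreduced partition `P_C(J) = [2(n-d_r) (d_r - d_{r-1})² ... (d_2 - d_1)² d_1²]`, the part
`2(n - d_r)` being omitted when it is zero. -/
theorem stmt_7 (n r : ℕ) (hn : 2 ≤ n) (hr : 1 ≤ r)
    (d : ℕ → ℕ) (h0 : d 0 = 0)
    (hmono : ∀ i, i < r → d i < d (i + 1))
    (hdn : d r ≤ n)
    (J : Finset ℕ) (hJ : J = (Finset.Icc 1 r).image d)
    (X : Matrix (Fin (2 * n)) (Fin (2 * n)) ℚ)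
    (hX : X = Matrix.of fun k l : Fin (2 * n) =>
      (if l.val = k.val + 1 ∧ 1 ≤ l.val ∧ l.val ≤ n - 1 ∧ l.val ∉ J then (1 : ℚ) else 0)
        - (if k.val = l.val + 1 ∧ n + 1 ≤ k.val ∧ k.val ≤ 2 * n - 1 ∧ (k.val - n) ∉ J
            then (1 : ℚ) else 0)
        + (if n ∉ J ∧ k.val = n - 1 ∧ l.val = 2 * n - 1 then (1 : ℚ) else 0))
    (D : Multiset ℕ) (hD : D = (Finset.Icc 1 r).val.map fun i => d i - d (i - 1))
    (P : Multiset ℕ) (hP : P = if d r = n then D + D else 2 * (n - d r) ::ₘ (D + D)) :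
    IsNilpotent X ∧ ∀ k : ℕ, (X ^ k).rank = (P.map fun p => p - k).sum := by
  have C : Stmt7.Ctx n r d J := ⟨hn, hr, h0, hmono, hdn, hJ⟩
  have hXok : Stmt7.XOK n J X := hX
  have hsumD : ∀ k : ℕ, (D.map (fun p => p - k)).sum
      = ∑ i ∈ Finset.Icc 1 r, (d i - d (i - 1) - k) := by
    intro k
    rw [hD, Multiset.map_map, Finset.sum_eq_multiset_sum]
    rfl
  constructor
  · refine ⟨2 * n, ?_⟩
    ext i j
    rw [Matrix.zero_apply]
    apply (Stmt7.pow_entry hn hXok (2 * n) i j).2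
    intro e
    have hs : (Stmt7.nxtIter n J (2 * n) i.val).isSome := by rw [e]; rfl
    rw [C.alive_iff (2 * n) i.val i.isLt] at hs
    have := C.life_lt i.isLt
    omega
  · intro k
    rw [Stmt7.rank_pow_eq_card hn hXok k]
    have hfc : (Finset.range (2 * n)).filter (fun a => (Stmt7.nxtIter n J k a).isSome)
        = (Finset.range (2 * n)).filter (fun a => k ≤ Stmt7.life n J a) := by
      apply Finset.filter_congr
      intro a ha
      rw [Finset.mem_range] at ha
      simpa using C.alive_iff k a ha
    rw [hfc, C.count_eq k, hP]
    by_cases hdr : d r = n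
    · rw [if_pos hdr, Multiset.map_add, Multiset.sum_add, hsumD]
      have h0' : n - d r = 0 := by omega
      rw [h0']
      omega
    · rw [if_neg hdr, Multiset.map_cons, Multiset.sum_cons, Multiset.map_add,
        Multiset.sum_add, hsumD]
      omega
end

section
/- Suppose n - 1 ∈ J and n ∈ J (so d_{r-1} = n-1 and d_r = n). Let X_J be the 2n×2n matrix over ℚ given by X_J = Σ_{i ∈ {1,...,n-1} \ J} (E_{i, i+1} - E_{n+i+1, n+i}). Then X_J is nilpotent and for every k ≥ 0, rank(X_J^k) = Σ_{p ∈ P} max(p - k, 0), where P is the multiset consisting of each difference d_i - d_{i-1} (1 ≤ i ≤ r) taken with multiplicity 2; that is, the Jordan type of X_J is the type D_n partition [(d_r - d_{r-1})^2 ... (d_2 - d_1)^2 d_1^2]. -/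
lemma entries (n : ℕ) (hn : 1 ≤ n) (J : Finset ℕ)
    (X : Matrix (Fin (2 * n)) (Fin (2 * n)) ℚ)
    (hX : X = Matrix.of fun k l : Fin (2 * n) =>
      (if l.val = k.val + 1 ∧ 1 ≤ l.val ∧ l.val ≤ n - 1 ∧ l.val ∉ J then (1 : ℚ) else 0)
        - (if k.val = l.val + 1 ∧ n + 1 ≤ k.val ∧ k.val ≤ 2 * n - 1 ∧ (k.val - n) ∉ J
            then (1 : ℚ) else 0)) :
    ∀ k, 1 ≤ k → ∀ a b : Fin (2 * n),
      (X ^ k) a b =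
        (if b.val = a.val + k ∧ ∀ j ∈ Finset.Ioc a.val b.val, 1 ≤ j ∧ j ≤ n - 1 ∧ j ∉ J
          then (1 : ℚ) else 0)
        + (if a.val = b.val + k ∧ ∀ j ∈ Finset.Ioc b.val a.val,
              n + 1 ≤ j ∧ j ≤ 2 * n - 1 ∧ j - n ∉ J
            then (-1 : ℚ) ^ k else 0) := by
  intro k hk
  induction k with
  | zero => omega
  | succ k IH =>
    rcases Nat.eq_or_lt_of_le hk with hk1 | hk1
    · -- base case k+1 = 1, i.e. k = 0
      have hk0 : k = 0 := by omega
      subst hk0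
      intro a b
      rw [pow_one, hX]
      simp only [Matrix.of_apply]
      have h1 : (b.val = a.val + 1 ∧ 1 ≤ b.val ∧ b.val ≤ n - 1 ∧ b.val ∉ J) ↔
          (b.val = a.val + (0 + 1) ∧ ∀ j ∈ Finset.Ioc a.val b.val,
            1 ≤ j ∧ j ≤ n - 1 ∧ j ∉ J) := by
        constructor
        · rintro ⟨hb, h⟩
          refine ⟨by omega, ?_⟩
          intro j hj
          simp only [Finset.mem_Ioc] at hj
          have : j = b.val := by omega
          subst this; exact h
        · rintro ⟨hb, h⟩
          refine ⟨by omega, h b.val ?_⟩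
          simp only [Finset.mem_Ioc]; omega
      have h2 : (a.val = b.val + 1 ∧ n + 1 ≤ a.val ∧ a.val ≤ 2 * n - 1 ∧ a.val - n ∉ J) ↔
          (a.val = b.val + (0 + 1) ∧ ∀ j ∈ Finset.Ioc b.val a.val,
            n + 1 ≤ j ∧ j ≤ 2 * n - 1 ∧ j - n ∉ J) := by
        constructor
        · rintro ⟨hb, h⟩
          refine ⟨by omega, ?_⟩
          intro j hj
          simp only [Finset.mem_Ioc] at hj
          have : j = a.val := by omega
          subst this; exact h
        · rintro ⟨hb, h⟩
          refine ⟨by omega, h a.val ?_⟩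
          simp only [Finset.mem_Ioc]; omega
      rw [if_congr h1 rfl rfl, if_congr h2 rfl rfl]
      split <;> split <;> ring
    · have hk' : 1 ≤ k := by omega
      have IH := IH hk'
      intro a b
      rw [pow_succ, Matrix.mul_apply]
      have step1 : ∀ c : Fin (2 * n), (X ^ k) a c * X c b =
          (if c.val = a.val + k ∧ ∀ j ∈ Finset.Ioc a.val c.val, 1 ≤ j ∧ j ≤ n - 1 ∧ j ∉ J
            then (1 : ℚ) else 0) * X c b
          + (if a.val = c.val + k ∧ ∀ j ∈ Finset.Ioc c.val a.val,
                n + 1 ≤ j ∧ j ≤ 2 * n - 1 ∧ j - n ∉ J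
              then (-1 : ℚ) ^ k else 0) * X c b := by
        intro c; rw [IH a c, add_mul]
      rw [Finset.sum_congr rfl fun c _ => step1 c, Finset.sum_add_distrib]
      have claim1 : (∑ c : Fin (2 * n),
          (if c.val = a.val + k ∧ ∀ j ∈ Finset.Ioc a.val c.val, 1 ≤ j ∧ j ≤ n - 1 ∧ j ∉ J
            then (1 : ℚ) else 0) * X c b) =
          (if b.val = a.val + (k + 1) ∧ ∀ j ∈ Finset.Ioc a.val b.val,
              1 ≤ j ∧ j ≤ n - 1 ∧ j ∉ J then (1 : ℚ) else 0) := by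
        by_cases h : a.val + k < 2 * n
        · rw [Finset.sum_eq_single (⟨a.val + k, h⟩ : Fin (2 * n))]
          · by_cases hC : ∀ j ∈ Finset.Ioc a.val (a.val + k), 1 ≤ j ∧ j ≤ n - 1 ∧ j ∉ J
            · rw [if_pos ⟨rfl, hC⟩, one_mul, hX]
              simp only [Matrix.of_apply]
              have hup : a.val + k ≤ n - 1 := by
                have := (hC (a.val + k) (by simp only [Finset.mem_Ioc]; omega)).2.1
                omega
              have hB : ¬((⟨a.val + k, h⟩ : Fin (2 * n)).val = b.val + 1 ∧
                  n + 1 ≤ (⟨a.val + k, h⟩ : Fin (2 * n)).val ∧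
                  (⟨a.val + k, h⟩ : Fin (2 * n)).val ≤ 2 * n - 1 ∧
                  (⟨a.val + k, h⟩ : Fin (2 * n)).val - n ∉ J) := by
                rintro ⟨-, h2, -⟩; simp only at h2; omega
              rw [if_neg hB, sub_zero]
              refine if_congr ?_ rfl rfl
              constructor
              · rintro ⟨hb, h1, h2, h3⟩
                refine ⟨by omega, ?_⟩
                intro j hj
                simp only [Finset.mem_Ioc] at hj
                rcases Nat.lt_or_ge j (a.val + k + 1) with hj' | hj'
                · exact hC j (by simp only [Finset.mem_Ioc]; omega)
                · have : j = b.val := by omega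
                  subst this; exact ⟨h1, h2, h3⟩
              · rintro ⟨hb, hch⟩
                have hbv := hch b.val (by simp only [Finset.mem_Ioc]; omega)
                exact ⟨by omega, hbv⟩
            · rw [if_neg (by rintro ⟨-, h'⟩; exact hC h'), zero_mul, eq_comm, if_neg]
              rintro ⟨hb, hch⟩
              exact hC fun j hj => by
                simp only [Finset.mem_Ioc] at hj
                exact hch j (by simp only [Finset.mem_Ioc]; omega)
          · intro c _ hc
            rw [if_neg, zero_mul]
            rintro ⟨hcv, -⟩
            exact hc (Fin.ext (by simpa using hcv))
          · intro habs; exact absurd (Finset.mem_univ _) habs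
        · rw [Finset.sum_eq_zero, eq_comm, if_neg]
          · rintro ⟨hb, -⟩; have := b.isLt; omega
          · intro c _
            rw [if_neg, zero_mul]
            rintro ⟨hcv, -⟩
            have := c.isLt; omega
      have claim2 : (∑ c : Fin (2 * n),
          (if a.val = c.val + k ∧ ∀ j ∈ Finset.Ioc c.val a.val,
              n + 1 ≤ j ∧ j ≤ 2 * n - 1 ∧ j - n ∉ J
            then (-1 : ℚ) ^ k else 0) * X c b) =
          (if a.val = b.val + (k + 1) ∧ ∀ j ∈ Finset.Ioc b.val a.val,
              n + 1 ≤ j ∧ j ≤ 2 * n - 1 ∧ j - n ∉ J then (-1 : ℚ) ^ (k + 1) else 0) := by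
        by_cases hak : k ≤ a.val
        · have h : a.val - k < 2 * n := by have := a.isLt; omega
          have hval : (⟨a.val - k, h⟩ : Fin (2 * n)).val = a.val - k := rfl
          rw [Finset.sum_eq_single (⟨a.val - k, h⟩ : Fin (2 * n))]
          · by_cases hC : ∀ j ∈ Finset.Ioc (a.val - k) a.val,
                n + 1 ≤ j ∧ j ≤ 2 * n - 1 ∧ j - n ∉ J
            · rw [if_pos ⟨by omega, hC⟩, hX]
              simp only [Matrix.of_apply]
              have hlow : n + 1 ≤ a.val - k + 1 :=
                (hC (a.val - k + 1) (by simp only [Finset.mem_Ioc]; omega)).1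
              have hA : ¬(b.val = (⟨a.val - k, h⟩ : Fin (2 * n)).val + 1 ∧
                  1 ≤ b.val ∧ b.val ≤ n - 1 ∧ b.val ∉ J) := by
                rintro ⟨h1, -, h2, -⟩; omega
              rw [if_neg hA, zero_sub, mul_neg]
              have hBC : ((⟨a.val - k, h⟩ : Fin (2 * n)).val = b.val + 1 ∧
                  n + 1 ≤ (⟨a.val - k, h⟩ : Fin (2 * n)).val ∧
                  (⟨a.val - k, h⟩ : Fin (2 * n)).val ≤ 2 * n - 1 ∧
                  (⟨a.val - k, h⟩ : Fin (2 * n)).val - n ∉ J) ↔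
                  (a.val = b.val + (k + 1) ∧ ∀ j ∈ Finset.Ioc b.val a.val,
                    n + 1 ≤ j ∧ j ≤ 2 * n - 1 ∧ j - n ∉ J) := by
                constructor
                · rintro ⟨h1, h2, h3, h4⟩
                  refine ⟨by omega, ?_⟩
                  intro j hj
                  simp only [Finset.mem_Ioc] at hj
                  rcases Nat.lt_or_ge (a.val - k) j with hj' | hj'
                  · exact hC j (by simp only [Finset.mem_Ioc]; omega)
                  · have : j = a.val - k := by omega
                    subst this; exact ⟨h2, h3, h4⟩
                · rintro ⟨hb, hch⟩
                  have := hch (a.val - k) (by simp only [Finset.mem_Ioc]; omega)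
                  exact ⟨by omega, this⟩
              by_cases hc : a.val = b.val + (k + 1) ∧ ∀ j ∈ Finset.Ioc b.val a.val,
                  n + 1 ≤ j ∧ j ≤ 2 * n - 1 ∧ j - n ∉ J
              · rw [if_pos hc, if_pos (hBC.mpr hc), pow_succ]; ring
              · rw [if_neg hc, if_neg (fun hb => hc (hBC.mp hb)), mul_zero, neg_zero]
            · rw [if_neg (by rintro ⟨-, h'⟩; exact hC h'), zero_mul, eq_comm, if_neg]
              rintro ⟨hb, hch⟩
              exact hC fun j hj => by
                simp only [Finset.mem_Ioc] at hj
                exact hch j (by simp only [Finset.mem_Ioc]; omega)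
          · intro c _ hc
            rw [if_neg, zero_mul]
            rintro ⟨hcv, -⟩
            exact hc (Fin.ext (by omega))
          · intro habs; exact absurd (Finset.mem_univ _) habs
        · rw [Finset.sum_eq_zero, eq_comm, if_neg]
          · rintro ⟨hb, -⟩; omega
          · intro c _
            rw [if_neg, zero_mul]
            rintro ⟨hcv, -⟩
            omega
      rw [claim1, claim2]

lemma gram (n : ℕ) (hn : 1 ≤ n) (J : Finset ℕ)
    (X : Matrix (Fin (2 * n)) (Fin (2 * n)) ℚ)
    (hX : X = Matrix.of fun k l : Fin (2 * n) =>
      (if l.val = k.val + 1 ∧ 1 ≤ l.val ∧ l.val ≤ n - 1 ∧ l.val ∉ J then (1 : ℚ) else 0)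
        - (if k.val = l.val + 1 ∧ n + 1 ≤ k.val ∧ k.val ≤ 2 * n - 1 ∧ (k.val - n) ∉ J
            then (1 : ℚ) else 0))
    (k : ℕ) (hk : 1 ≤ k) :
    (X ^ k) * (X ^ k).transpose = Matrix.diagonal (fun a : Fin (2 * n) =>
      if (∀ j ∈ Finset.Ioc a.val (a.val + k), 1 ≤ j ∧ j ≤ n - 1 ∧ j ∉ J) ∨
         (k ≤ a.val ∧ ∀ j ∈ Finset.Ioc (a.val - k) a.val,
            n + 1 ≤ j ∧ j ≤ 2 * n - 1 ∧ j - n ∉ J)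
      then (1 : ℚ) else 0) := by
  have E := entries n hn J X hX k hk
  ext a a'
  rw [Matrix.mul_apply]
  simp only [Matrix.transpose_apply]
  have expand : ∀ b : Fin (2 * n), (X ^ k) a b * (X ^ k) a' b =
      ((if b.val = a.val + k ∧ ∀ j ∈ Finset.Ioc a.val b.val, 1 ≤ j ∧ j ≤ n - 1 ∧ j ∉ J
          then (1 : ℚ) else 0)
        + (if a.val = b.val + k ∧ ∀ j ∈ Finset.Ioc b.val a.val,
              n + 1 ≤ j ∧ j ≤ 2 * n - 1 ∧ j - n ∉ J then (-1 : ℚ) ^ k else 0))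
      * ((if b.val = a'.val + k ∧ ∀ j ∈ Finset.Ioc a'.val b.val, 1 ≤ j ∧ j ≤ n - 1 ∧ j ∉ J
          then (1 : ℚ) else 0)
        + (if a'.val = b.val + k ∧ ∀ j ∈ Finset.Ioc b.val a'.val,
              n + 1 ≤ j ∧ j ≤ 2 * n - 1 ∧ j - n ∉ J then (-1 : ℚ) ^ k else 0)) := by
    intro b; rw [E a b, E a' b]
  rw [Finset.sum_congr rfl fun b _ => expand b]
  by_cases haa : a = a'
  · subst haa
    rw [Matrix.diagonal_apply_eq]
    have term : ∀ b : Fin (2 * n),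
        ((if b.val = a.val + k ∧ ∀ j ∈ Finset.Ioc a.val b.val, 1 ≤ j ∧ j ≤ n - 1 ∧ j ∉ J
            then (1 : ℚ) else 0)
          + (if a.val = b.val + k ∧ ∀ j ∈ Finset.Ioc b.val a.val,
                n + 1 ≤ j ∧ j ≤ 2 * n - 1 ∧ j - n ∉ J then (-1 : ℚ) ^ k else 0))
        * ((if b.val = a.val + k ∧ ∀ j ∈ Finset.Ioc a.val b.val, 1 ≤ j ∧ j ≤ n - 1 ∧ j ∉ J
            then (1 : ℚ) else 0)
          + (if a.val = b.val + k ∧ ∀ j ∈ Finset.Ioc b.val a.val,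
                n + 1 ≤ j ∧ j ≤ 2 * n - 1 ∧ j - n ∉ J then (-1 : ℚ) ^ k else 0))
        = (if b.val = a.val + k ∧ ∀ j ∈ Finset.Ioc a.val b.val, 1 ≤ j ∧ j ≤ n - 1 ∧ j ∉ J
            then (1 : ℚ) else 0)
          + (if a.val = b.val + k ∧ ∀ j ∈ Finset.Ioc b.val a.val,
                n + 1 ≤ j ∧ j ≤ 2 * n - 1 ∧ j - n ∉ J then (1 : ℚ) else 0) := by
      intro b
      by_cases h1 : b.val = a.val + k ∧ ∀ j ∈ Finset.Ioc a.val b.val, 1 ≤ j ∧ j ≤ n - 1 ∧ j ∉ J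
      · have h2 : ¬(a.val = b.val + k ∧ ∀ j ∈ Finset.Ioc b.val a.val,
            n + 1 ≤ j ∧ j ≤ 2 * n - 1 ∧ j - n ∉ J) := by
          rintro ⟨h2, -⟩; have := h1.1; omega
        rw [if_pos h1, if_neg h2, if_neg h2]; ring
      · rw [if_neg h1]
        by_cases h2 : a.val = b.val + k ∧ ∀ j ∈ Finset.Ioc b.val a.val,
            n + 1 ≤ j ∧ j ≤ 2 * n - 1 ∧ j - n ∉ J
        · rw [if_pos h2, if_pos h2]
          have hpow : ((-1 : ℚ) ^ k) * ((-1 : ℚ) ^ k) = 1 := by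
            rw [← pow_add, show k + k = 2 * k by omega, pow_mul]; norm_num
          linear_combination hpow
        · rw [if_neg h2, if_neg h2]; ring
    rw [Finset.sum_congr rfl fun b _ => term b, Finset.sum_add_distrib]
    have sumU1 : (∑ b : Fin (2 * n),
        (if b.val = a.val + k ∧ ∀ j ∈ Finset.Ioc a.val b.val, 1 ≤ j ∧ j ≤ n - 1 ∧ j ∉ J
          then (1 : ℚ) else 0)) =
        (if ∀ j ∈ Finset.Ioc a.val (a.val + k), 1 ≤ j ∧ j ≤ n - 1 ∧ j ∉ J
          then (1 : ℚ) else 0) := by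
      by_cases hC : ∀ j ∈ Finset.Ioc a.val (a.val + k), 1 ≤ j ∧ j ≤ n - 1 ∧ j ∉ J
      · have hb2 : a.val + k < 2 * n := by
          have := (hC (a.val + k) (by simp only [Finset.mem_Ioc]; omega)).2.1
          omega
        have hval : (⟨a.val + k, hb2⟩ : Fin (2 * n)).val = a.val + k := rfl
        rw [if_pos hC, Finset.sum_eq_single (⟨a.val + k, hb2⟩ : Fin (2 * n))]
        · rw [if_pos ⟨rfl, hC⟩]
        · intro c _ hc
          rw [if_neg]
          rintro ⟨hcv, -⟩
          exact hc (Fin.ext (by omega))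
        · intro habs; exact absurd (Finset.mem_univ _) habs
      · rw [if_neg hC, Finset.sum_eq_zero]
        intro b _
        rw [if_neg]
        rintro ⟨hb, hch⟩
        refine hC fun j hj => hch j ?_
        rw [hb]; exact hj
    have sumU2 : (∑ b : Fin (2 * n),
        (if a.val = b.val + k ∧ ∀ j ∈ Finset.Ioc b.val a.val,
            n + 1 ≤ j ∧ j ≤ 2 * n - 1 ∧ j - n ∉ J then (1 : ℚ) else 0)) =
        (if k ≤ a.val ∧ ∀ j ∈ Finset.Ioc (a.val - k) a.val,
            n + 1 ≤ j ∧ j ≤ 2 * n - 1 ∧ j - n ∉ J then (1 : ℚ) else 0) := by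
      by_cases hC : k ≤ a.val ∧ ∀ j ∈ Finset.Ioc (a.val - k) a.val,
          n + 1 ≤ j ∧ j ≤ 2 * n - 1 ∧ j - n ∉ J
      · have hb2 : a.val - k < 2 * n := by have := a.isLt; omega
        have hval : (⟨a.val - k, hb2⟩ : Fin (2 * n)).val = a.val - k := rfl
        rw [if_pos hC, Finset.sum_eq_single (⟨a.val - k, hb2⟩ : Fin (2 * n))]
        · rw [if_pos ⟨by omega, hC.2⟩]
        · intro c _ hc
          rw [if_neg]
          rintro ⟨hcv, -⟩
          exact hc (Fin.ext (by omega))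
        · intro habs; exact absurd (Finset.mem_univ _) habs
      · rw [if_neg hC, Finset.sum_eq_zero]
        intro b _
        rw [if_neg]
        rintro ⟨hb, hch⟩
        have hbv : b.val = a.val - k := by omega
        refine hC ⟨by omega, fun j hj => hch j ?_⟩
        rw [hbv]; exact hj
    rw [sumU1, sumU2]
    by_cases hc1 : ∀ j ∈ Finset.Ioc a.val (a.val + k), 1 ≤ j ∧ j ≤ n - 1 ∧ j ∉ J
    · have hc2 : ¬(k ≤ a.val ∧ ∀ j ∈ Finset.Ioc (a.val - k) a.val,
          n + 1 ≤ j ∧ j ≤ 2 * n - 1 ∧ j - n ∉ J) := by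
        rintro ⟨hka, hch⟩
        have t1 := (hc1 (a.val + k) (by simp only [Finset.mem_Ioc]; omega)).2.1
        have t2 := (hch a.val (by simp only [Finset.mem_Ioc]; omega)).1
        omega
      rw [if_pos hc1, if_neg hc2, if_pos (Or.inl hc1), add_zero]
    · rw [if_neg hc1]
      by_cases hc2 : k ≤ a.val ∧ ∀ j ∈ Finset.Ioc (a.val - k) a.val,
          n + 1 ≤ j ∧ j ≤ 2 * n - 1 ∧ j - n ∉ J
      · rw [if_pos hc2, if_pos (Or.inr hc2), zero_add]
      · rw [if_neg hc2, if_neg (by rintro (h | h); exacts [hc1 h, hc2 h]), add_zero]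
  · rw [Matrix.diagonal_apply_ne _ haa, Finset.sum_eq_zero]
    intro b _
    have e11 : (if b.val = a.val + k ∧ ∀ j ∈ Finset.Ioc a.val b.val,
          1 ≤ j ∧ j ≤ n - 1 ∧ j ∉ J then (1 : ℚ) else 0)
        * (if b.val = a'.val + k ∧ ∀ j ∈ Finset.Ioc a'.val b.val,
          1 ≤ j ∧ j ≤ n - 1 ∧ j ∉ J then (1 : ℚ) else 0) = 0 := by
      by_cases h1 : b.val = a.val + k ∧ ∀ j ∈ Finset.Ioc a.val b.val,
          1 ≤ j ∧ j ≤ n - 1 ∧ j ∉ J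
      · rw [if_pos h1, one_mul, if_neg]
        rintro ⟨h2, -⟩
        exact haa (Fin.ext (by omega))
      · rw [if_neg h1, zero_mul]
    have e12 : (if b.val = a.val + k ∧ ∀ j ∈ Finset.Ioc a.val b.val,
          1 ≤ j ∧ j ≤ n - 1 ∧ j ∉ J then (1 : ℚ) else 0)
        * (if a'.val = b.val + k ∧ ∀ j ∈ Finset.Ioc b.val a'.val,
          n + 1 ≤ j ∧ j ≤ 2 * n - 1 ∧ j - n ∉ J then (-1 : ℚ) ^ k else 0) = 0 := by
      by_cases h1 : b.val = a.val + k ∧ ∀ j ∈ Finset.Ioc a.val b.val,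
          1 ≤ j ∧ j ≤ n - 1 ∧ j ∉ J
      · rw [if_pos h1, one_mul, if_neg]
        rintro ⟨h2, hch⟩
        have t1 := (h1.2 b.val (by simp only [Finset.mem_Ioc]; omega)).2.1
        have t2 := (hch (b.val + 1) (by simp only [Finset.mem_Ioc]; omega)).1
        omega
      · rw [if_neg h1, zero_mul]
    have e21 : (if a.val = b.val + k ∧ ∀ j ∈ Finset.Ioc b.val a.val,
          n + 1 ≤ j ∧ j ≤ 2 * n - 1 ∧ j - n ∉ J then (-1 : ℚ) ^ k else 0)
        * (if b.val = a'.val + k ∧ ∀ j ∈ Finset.Ioc a'.val b.val,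
          1 ≤ j ∧ j ≤ n - 1 ∧ j ∉ J then (1 : ℚ) else 0) = 0 := by
      by_cases h1 : b.val = a'.val + k ∧ ∀ j ∈ Finset.Ioc a'.val b.val,
          1 ≤ j ∧ j ≤ n - 1 ∧ j ∉ J
      · rw [if_neg, zero_mul]
        rintro ⟨h2, hch⟩
        have t1 := (h1.2 b.val (by simp only [Finset.mem_Ioc]; omega)).2.1
        have t2 := (hch (b.val + 1) (by simp only [Finset.mem_Ioc]; omega)).1
        omega
      · rw [if_neg h1, mul_zero]
    have e22 : (if a.val = b.val + k ∧ ∀ j ∈ Finset.Ioc b.val a.val,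
          n + 1 ≤ j ∧ j ≤ 2 * n - 1 ∧ j - n ∉ J then (-1 : ℚ) ^ k else 0)
        * (if a'.val = b.val + k ∧ ∀ j ∈ Finset.Ioc b.val a'.val,
          n + 1 ≤ j ∧ j ≤ 2 * n - 1 ∧ j - n ∉ J then (-1 : ℚ) ^ k else 0) = 0 := by
      by_cases h1 : a.val = b.val + k ∧ ∀ j ∈ Finset.Ioc b.val a.val,
          n + 1 ≤ j ∧ j ≤ 2 * n - 1 ∧ j - n ∉ J
      · rw [if_pos h1, if_neg]
        · ring
        · rintro ⟨h2, -⟩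
          exact haa (Fin.ext (by omega))
      · rw [if_neg h1, zero_mul]
    linear_combination e11 + e12 + e21 + e22


section
variable (n r : ℕ) (d : ℕ → ℕ) (J : Finset ℕ)

lemma master (hn : 4 ≤ n)
    (h0 : d 0 = 0) (hdr : d r = n)
    (hlt : ∀ i j, i < j → j ≤ r → d i < d j)
    (hJ : J = (Finset.Icc 1 r).image d) :
    ∀ a k, 1 ≤ k →
      ((∀ j ∈ Finset.Ioc a (a + k), 1 ≤ j ∧ j ≤ n - 1 ∧ j ∉ J) ↔
        ∃ i, 1 ≤ i ∧ i ≤ r ∧ d (i - 1) ≤ a ∧ a + k < d i) := by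
  have hle : ∀ i j, i ≤ j → j ≤ r → d i ≤ d j := by
    intro i j hij hjr
    rcases Nat.eq_or_lt_of_le hij with h | h
    · subst h; exact le_refl _
    · exact le_of_lt (hlt i j h hjr)
  have hnotJ : ∀ i s, 1 ≤ i → i ≤ r → d (i - 1) < s → s < d i → s ∉ J := by
    intro i s hi1 hir hs1 hs2 hsJ
    rw [hJ, Finset.mem_image] at hsJ
    obtain ⟨i', hi', hdi'⟩ := hsJ
    rw [Finset.mem_Icc] at hi'
    have h1 : i - 1 < i' := by
      by_contra hcon
      have := hle i' (i - 1) (by omega) (by omega)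
      omega
    have h2 : i' < i := by
      by_contra hcon
      have := hle i i' (by omega) (by omega)
      omega
    omega
  have hgap : ∀ m, m ≤ r → ∀ a, a < d m → ∃ i, i < m ∧ d i ≤ a ∧ a < d (i + 1) := by
    intro m
    induction m with
    | zero => intro _ a ha; omega
    | succ m IH =>
      intro hm a ha
      rcases le_or_gt (d m) a with h | h
      · exact ⟨m, by omega, h, ha⟩
      · obtain ⟨i, h1, h2, h3⟩ := IH (by omega) a h
        exact ⟨i, by omega, h2, h3⟩
  intro a k hk
  constructor
  · intro h
    have han : a < n := by
      have := (h (a + 1) (by simp only [Finset.mem_Ioc]; omega)).2.1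
      omega
    obtain ⟨i, hir, hia, hia'⟩ := hgap r (le_refl r) a (by omega)
    refine ⟨i + 1, by omega, by omega, by simpa using hia, ?_⟩
    by_contra hcon
    push_neg at hcon
    have hmem : d (i + 1) ∈ J := by
      rw [hJ, Finset.mem_image]
      exact ⟨i + 1, Finset.mem_Icc.mpr (by omega), rfl⟩
    exact (h (d (i + 1)) (by simp only [Finset.mem_Ioc]; omega)).2.2 hmem
  · rintro ⟨i, hi1, hir, hia, hik⟩
    intro j hj
    rw [Finset.mem_Ioc] at hj
    have hdin : d i ≤ n := hdr ▸ hle i r hir (le_refl r)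
    exact ⟨by omega, by omega, hnotJ i j hi1 hir (by omega) (by omega)⟩

lemma master2 (hn : 4 ≤ n)
    (h0 : d 0 = 0) (hdr : d r = n)
    (hlt : ∀ i j, i < j → j ≤ r → d i < d j)
    (hJ : J = (Finset.Icc 1 r).image d) :
    ∀ a k, 1 ≤ k →
      ((k ≤ a ∧ ∀ j ∈ Finset.Ioc (a - k) a, n + 1 ≤ j ∧ j ≤ 2 * n - 1 ∧ j - n ∉ J) ↔
        ∃ i, 1 ≤ i ∧ i ≤ r ∧ n + d (i - 1) + k ≤ a ∧ a < n + d i) := by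
  have M := master n r d J hn h0 hdr hlt hJ
  intro a k hk
  constructor
  · rintro ⟨hka, hch⟩
    have hnk : n + k ≤ a := by
      have := (hch (a - k + 1) (by simp only [Finset.mem_Ioc]; omega)).1
      omega
    have hchain : ∀ s ∈ Finset.Ioc (a - n - k) (a - n - k + k), 1 ≤ s ∧ s ≤ n - 1 ∧ s ∉ J := by
      intro s hs
      rw [Finset.mem_Ioc] at hs
      have ht := hch (s + n) (by simp only [Finset.mem_Ioc]; omega)
      refine ⟨by omega, by omega, ?_⟩
      have : s + n - n = s := by omega
      rw [← this]; exact ht.2.2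
    obtain ⟨i, hi1, hir, hia, hik⟩ := (M (a - n - k) k hk).mp hchain
    exact ⟨i, hi1, hir, by omega, by omega⟩
  · rintro ⟨i, hi1, hir, hia, hik⟩
    have hchain := (M (a - n - k) k hk).mpr ⟨i, hi1, hir, by omega, by omega⟩
    refine ⟨by omega, ?_⟩
    intro j hj
    rw [Finset.mem_Ioc] at hj
    have hs := hchain (j - n) (by simp only [Finset.mem_Ioc]; omega)
    exact ⟨by omega, by omega, hs.2.2⟩

lemma count1 (hn : 4 ≤ n)
    (h0 : d 0 = 0) (hdr : d r = n)
    (hlt : ∀ i j, i < j → j ≤ r → d i < d j)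
    (hJ : J = (Finset.Icc 1 r).image d)
    (k : ℕ) (hk : 1 ≤ k) :
    ((Finset.range (2 * n)).filter
      (fun j => ∀ t ∈ Finset.Ioc j (j + k), 1 ≤ t ∧ t ≤ n - 1 ∧ t ∉ J)).card
      = ∑ i ∈ Finset.Icc 1 r, ((d i - d (i - 1)) - k) := by
  have M := master n r d J hn h0 hdr hlt hJ
  have hle : ∀ i j, i ≤ j → j ≤ r → d i ≤ d j := by
    intro i j hij hjr
    rcases Nat.eq_or_lt_of_le hij with h | h
    · subst h; exact le_refl _
    · exact le_of_lt (hlt i j h hjr)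
  have hset : ((Finset.range (2 * n)).filter
      (fun j => ∀ t ∈ Finset.Ioc j (j + k), 1 ≤ t ∧ t ≤ n - 1 ∧ t ∉ J))
      = (Finset.Icc 1 r).biUnion (fun i => Finset.Ico (d (i - 1)) (d i - k)) := by
    ext j
    rw [Finset.mem_filter, Finset.mem_range, Finset.mem_biUnion]
    constructor
    · rintro ⟨hj2n, hch⟩
      obtain ⟨i, hi1, hir, hia, hik⟩ := (M j k hk).mp hch
      exact ⟨i, Finset.mem_Icc.mpr ⟨hi1, hir⟩, Finset.mem_Ico.mpr ⟨hia, by omega⟩⟩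
    · rintro ⟨i, hi, hj⟩
      rw [Finset.mem_Icc] at hi
      rw [Finset.mem_Ico] at hj
      have hdin : d i ≤ n := hdr ▸ hle i r hi.2 (le_refl r)
      refine ⟨by omega, (M j k hk).mpr ⟨i, hi.1, hi.2, hj.1, by omega⟩⟩
  rw [hset, Finset.card_biUnion]
  · refine Finset.sum_congr rfl fun i hi => ?_
    rw [Nat.card_Ico]
    omega
  · intro x hx y hy hxy
    rw [Finset.mem_coe, Finset.mem_Icc] at hx hy
    rw [Function.onFun, Finset.disjoint_left]
    intro j hjx hjy
    rw [Finset.mem_Ico] at hjx hjy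
    rcases Nat.lt_or_ge x y with h | h
    · have := hle x (y - 1) (by omega) (by omega)
      omega
    · have hyx : y < x := by omega
      have := hle y (x - 1) (by omega) (by omega)
      omega

lemma count2 (hn : 4 ≤ n)
    (h0 : d 0 = 0) (hdr : d r = n)
    (hlt : ∀ i j, i < j → j ≤ r → d i < d j)
    (hJ : J = (Finset.Icc 1 r).image d)
    (k : ℕ) (hk : 1 ≤ k) :
    ((Finset.range (2 * n)).filter
      (fun j => k ≤ j ∧ ∀ t ∈ Finset.Ioc (j - k) j, n + 1 ≤ t ∧ t ≤ 2 * n - 1 ∧ t - n ∉ J)).card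
      = ∑ i ∈ Finset.Icc 1 r, ((d i - d (i - 1)) - k) := by
  have M := master2 n r d J hn h0 hdr hlt hJ
  have hle : ∀ i j, i ≤ j → j ≤ r → d i ≤ d j := by
    intro i j hij hjr
    rcases Nat.eq_or_lt_of_le hij with h | h
    · subst h; exact le_refl _
    · exact le_of_lt (hlt i j h hjr)
  have hset : ((Finset.range (2 * n)).filter
      (fun j => k ≤ j ∧ ∀ t ∈ Finset.Ioc (j - k) j, n + 1 ≤ t ∧ t ≤ 2 * n - 1 ∧ t - n ∉ J))
      = (Finset.Icc 1 r).biUnion (fun i => Finset.Ico (n + d (i - 1) + k) (n + d i)) := by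
    ext j
    rw [Finset.mem_filter, Finset.mem_range, Finset.mem_biUnion]
    constructor
    · rintro ⟨hj2n, hch⟩
      obtain ⟨i, hi1, hir, hia, hik⟩ := (M j k hk).mp hch
      exact ⟨i, Finset.mem_Icc.mpr ⟨hi1, hir⟩, Finset.mem_Ico.mpr ⟨hia, hik⟩⟩
    · rintro ⟨i, hi, hj⟩
      rw [Finset.mem_Icc] at hi
      rw [Finset.mem_Ico] at hj
      have hdin : d i ≤ n := hdr ▸ hle i r hi.2 (le_refl r)
      refine ⟨by omega, (M j k hk).mpr ⟨i, hi.1, hi.2, hj.1, hj.2⟩⟩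
  rw [hset, Finset.card_biUnion]
  · refine Finset.sum_congr rfl fun i hi => ?_
    rw [Nat.card_Ico]
    omega
  · intro x hx y hy hxy
    rw [Finset.mem_coe, Finset.mem_Icc] at hx hy
    rw [Function.onFun, Finset.disjoint_left]
    intro j hjx hjy
    rw [Finset.mem_Ico] at hjx hjy
    rcases Nat.lt_or_ge x y with h | h
    · have := hle x (y - 1) (by omega) (by omega)
      omega
    · have hyx : y < x := by omega
      have := hle y (x - 1) (by omega) (by omega)
      omega

end


/-- Type `D_n`, case `n-1 ∈ J` and `n ∈ J`: the representative
`X_J = Σ_{i ∈ {1,...,n-1} \ J} (E_{i,i+1} - E_{n+i+1,n+i})`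
(1-based indices, realized here 0-based on `Fin (2n)`) is nilpotent with Jordan type the
partition `[(d_r - d_{r-1})² ... (d_2 - d_1)² d_1²]`. -/
theorem stmt_9 (n r : ℕ) (hn : 4 ≤ n) (hr : 1 ≤ r)
    (d : ℕ → ℕ) (h0 : d 0 = 0)
    (hmono : ∀ i, i < r → d i < d (i + 1))
    (hdn : d r ≤ n)
    (J : Finset ℕ) (hJ : J = (Finset.Icc 1 r).image d)
    (hn1 : (n - 1) ∈ J) (hn2 : n ∈ J)
    (X : Matrix (Fin (2 * n)) (Fin (2 * n)) ℚ)
    (hX : X = Matrix.of fun k l : Fin (2 * n) =>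
      (if l.val = k.val + 1 ∧ 1 ≤ l.val ∧ l.val ≤ n - 1 ∧ l.val ∉ J then (1 : ℚ) else 0)
        - (if k.val = l.val + 1 ∧ n + 1 ≤ k.val ∧ k.val ≤ 2 * n - 1 ∧ (k.val - n) ∉ J
            then (1 : ℚ) else 0))
    (D : Multiset ℕ) (hD : D = (Finset.Icc 1 r).val.map fun i => d i - d (i - 1))
    (P : Multiset ℕ) (hP : P = D + D) :
    IsNilpotent X ∧ ∀ k : ℕ, (X ^ k).rank = (P.map fun p => p - k).sum := by
  have hn1' : 1 ≤ n := by omega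
  have hlt0 : ∀ j, j ≤ r → ∀ i, i < j → d i < d j := by
    intro j
    induction j with
    | zero => intro _ i h; omega
    | succ j IH =>
      intro hjr i hij
      rcases Nat.lt_or_ge i j with h | h
      · exact lt_trans (IH (by omega) i h) (hmono j (by omega))
      · have hij' : i = j := by omega
        subst hij'
        exact hmono i (by omega)
  have hlt : ∀ i j, i < j → j ≤ r → d i < d j := fun i j a b => hlt0 j b i a
  have hdr : d r = n := by
    rw [hJ, Finset.mem_image] at hn2
    obtain ⟨i, hi, hdi⟩ := hn2
    rw [Finset.mem_Icc] at hi
    rcases Nat.lt_or_ge i r with h | h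
    · have := hlt i r h (le_refl r); omega
    · have hir : i = r := by omega
      subst hir; exact hdi
  have E := entries n hn1' J X hX
  have hXn : X ^ n = 0 := by
    ext a b
    have h1 : ¬(b.val = a.val + n ∧ ∀ j ∈ Finset.Ioc a.val b.val,
        1 ≤ j ∧ j ≤ n - 1 ∧ j ∉ J) := by
      rintro ⟨hab, hch⟩
      have := (hch b.val (by simp only [Finset.mem_Ioc]; omega)).2.1
      omega
    have h2 : ¬(a.val = b.val + n ∧ ∀ j ∈ Finset.Ioc b.val a.val,
        n + 1 ≤ j ∧ j ≤ 2 * n - 1 ∧ j - n ∉ J) := by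
      rintro ⟨hab, hch⟩
      have t1 := (hch (b.val + 1) (by simp only [Finset.mem_Ioc]; omega)).1
      have t2 := (hch a.val (by simp only [Finset.mem_Ioc]; omega)).2.1
      omega
    rw [E n (by omega) a b, if_neg h1, if_neg h2, add_zero, Matrix.zero_apply]
  refine ⟨⟨n, hXn⟩, ?_⟩
  intro k
  rcases Nat.eq_zero_or_pos k with hk0 | hk
  · subst hk0
    have tele : ∀ m, m ≤ r → ∑ i ∈ Finset.Icc 1 m, (d i - d (i - 1)) = d m := by
      intro m
      induction m with
      | zero => intro _; rw [Finset.Icc_eq_empty (by omega), Finset.sum_empty, h0]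
      | succ m IH =>
        intro hm
        rw [Finset.sum_Icc_succ_top (by omega : 1 ≤ m + 1), IH (by omega)]
        have := hmono m (by omega)
        simp only [Nat.add_sub_cancel]
        omega
    rw [pow_zero, Matrix.rank_one, Fintype.card_fin]
    rw [hP, hD, Multiset.map_add, Multiset.sum_add, Multiset.map_map]
    have hsum : ((Finset.Icc 1 r).val.map
        ((fun p => p - 0) ∘ (fun i => d i - d (i - 1)))).sum
        = ∑ i ∈ Finset.Icc 1 r, (d i - d (i - 1)) := by
      refine congrArg Multiset.sum (Multiset.map_congr rfl ?_)
      intro x _; simp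
    rw [hsum, tele r (le_refl r), hdr]
    omega
  · have hk1 : 1 ≤ k := hk
    have G := gram n hn1' J X hX k hk1
    rw [← Matrix.rank_self_mul_transpose (X ^ k), G, Matrix.rank_diagonal,
      Fintype.card_subtype]
    have hfil : (Finset.univ.filter (fun a : Fin (2 * n) =>
        (if (∀ j ∈ Finset.Ioc a.val (a.val + k), 1 ≤ j ∧ j ≤ n - 1 ∧ j ∉ J) ∨
            (k ≤ a.val ∧ ∀ j ∈ Finset.Ioc (a.val - k) a.val,
              n + 1 ≤ j ∧ j ≤ 2 * n - 1 ∧ j - n ∉ J)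
          then (1 : ℚ) else 0) ≠ 0))
        = Finset.univ.filter (fun a : Fin (2 * n) =>
          (∀ j ∈ Finset.Ioc a.val (a.val + k), 1 ≤ j ∧ j ≤ n - 1 ∧ j ∉ J) ∨
            (k ≤ a.val ∧ ∀ j ∈ Finset.Ioc (a.val - k) a.val,
              n + 1 ≤ j ∧ j ≤ 2 * n - 1 ∧ j - n ∉ J)) := by
      refine Finset.filter_congr ?_
      intro a _
      simp only [ne_eq, ite_eq_right_iff, one_ne_zero, imp_false, not_not]
    rw [hfil, Finset.filter_or, Finset.card_union_of_disjoint]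
    · have conv1 : (Finset.univ.filter (fun a : Fin (2 * n) =>
          ∀ j ∈ Finset.Ioc a.val (a.val + k), 1 ≤ j ∧ j ≤ n - 1 ∧ j ∉ J)).card
          = ((Finset.range (2 * n)).filter
            (fun j => ∀ t ∈ Finset.Ioc j (j + k), 1 ≤ t ∧ t ≤ n - 1 ∧ t ∉ J)).card := by
        rw [Finset.card_filter, Finset.card_filter]
        exact Fin.sum_univ_eq_sum_range
          (fun j => if ∀ t ∈ Finset.Ioc j (j + k), 1 ≤ t ∧ t ≤ n - 1 ∧ t ∉ J then 1 else 0)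
          (2 * n)
      have conv2 : (Finset.univ.filter (fun a : Fin (2 * n) =>
          k ≤ a.val ∧ ∀ j ∈ Finset.Ioc (a.val - k) a.val,
            n + 1 ≤ j ∧ j ≤ 2 * n - 1 ∧ j - n ∉ J)).card
          = ((Finset.range (2 * n)).filter
            (fun j => k ≤ j ∧ ∀ t ∈ Finset.Ioc (j - k) j,
              n + 1 ≤ t ∧ t ≤ 2 * n - 1 ∧ t - n ∉ J)).card := by
        rw [Finset.card_filter, Finset.card_filter]
        exact Fin.sum_univ_eq_sum_range
          (fun j => if k ≤ j ∧ ∀ t ∈ Finset.Ioc (j - k) j,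
            n + 1 ≤ t ∧ t ≤ 2 * n - 1 ∧ t - n ∉ J then 1 else 0)
          (2 * n)
      rw [conv1, conv2, count1 n r d J hn h0 hdr hlt hJ k hk1,
        count2 n r d J hn h0 hdr hlt hJ k hk1]
      rw [hP, hD, Multiset.map_add, Multiset.sum_add, Multiset.map_map]
      have hsum : ((Finset.Icc 1 r).val.map
          ((fun p => p - k) ∘ (fun i => d i - d (i - 1)))).sum
          = ∑ i ∈ Finset.Icc 1 r, ((d i - d (i - 1)) - k) := rfl
      rw [hsum]
    · rw [Finset.disjoint_left]
      intro a ha hb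
      rw [Finset.mem_filter] at ha hb
      have t1 := (ha.2 (a.val + k) (by simp only [Finset.mem_Ioc]; omega)).2.1
      have t2 := (hb.2.2 a.val (by simp only [Finset.mem_Ioc]; omega)).1
      omega
end

section
/- Both n - 1 ∉ J and n ∉ J hold if and only if the value 1 occurs in the multiset P_D(J) with odd multiplicity. -/
/-- Type `D_n`: `n-1 ∉ J` and `n ∉ J` hold iff the value `1` occurs in the multiset
`P_D(J)` with odd multiplicity. -/
theorem stmt_13 (n r : ℕ) (hn : 4 ≤ n) (hr : 1 ≤ r)
    (d : ℕ → ℕ) (h0 : d 0 = 0)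
    (hmono : ∀ i, i < r → d i < d (i + 1))
    (hdn : d r ≤ n)
    (J : Finset ℕ) (hJ : J = (Finset.Icc 1 r).image d)
    (D : Multiset ℕ) (hD : D = (Finset.Icc 1 r).val.map fun i => d i - d (i - 1))
    (D' : Multiset ℕ) (hD' : D' = (Finset.Icc 1 (r - 1)).val.map fun i => d i - d (i - 1))
    (P : Multiset ℕ)
    (hP : P = if (n - 1) ∉ J ∧ n ∉ J then (2 * (n - d r) - 1) ::ₘ 1 ::ₘ (D + D)
      else if (n - 1) ∈ J ∧ n ∈ J then D + D
      else (n - d (r - 1)) ::ₘ (n - d (r - 1)) ::ₘ (D' + D')) :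
    ((n - 1) ∉ J ∧ n ∉ J) ↔ Odd (P.count 1) := by
  by_cases hc : (n - 1) ∉ J ∧ n ∉ J
  · refine iff_of_true hc ?_
    rw [hP, if_pos hc]
    have hdr : d r ∈ J := by
      rw [hJ]
      exact Finset.mem_image.2 ⟨r, Finset.mem_Icc.2 ⟨hr, le_rfl⟩, rfl⟩
    have h1 : d r ≠ n := fun e => hc.2 (e ▸ hdr)
    have h2 : d r ≠ n - 1 := fun e => hc.1 (e ▸ hdr)
    have hne : ¬ (1 = 2 * (n - d r) - 1) := by omega
    simp only [Multiset.count_cons, Multiset.count_add, if_neg hne, eq_self_iff_true, if_true]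
    rw [Nat.odd_iff]
    omega
  · refine iff_of_false hc ?_
    rw [hP, if_neg hc]
    split
    · simp only [Multiset.count_add]
      intro h
      rcases h with ⟨k, hk⟩
      omega
    · simp only [Multiset.count_cons, Multiset.count_add]
      intro h
      rcases h with ⟨k, hk⟩
      split at hk <;> omega
end

section
/- The following are equivalent: (a) n - 1 ∉ J, n ∉ J, and every element of J is even; (b) in the multiset P_D(J), the value 1 occurs with multiplicity exactly 1, there is exactly one odd value greater than 1 and it occurs with multiplicity 1, and every even value occurs with even multiplicity. (This is the combinatorial form, in type D_n, of the statement that Z(J) is the full center Z exactly when P_D(J) has this shape.) -/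
/-- Type `D_n`: the conditions (a) `n-1 ∉ J`, `n ∉ J`, and every element of `J` is even,
and (b) in `P_D(J)` the value 1 occurs with multiplicity exactly 1, there is exactly one
odd value greater than 1 and it occurs with multiplicity 1, and every even value occurs
with even multiplicity, are equivalent. -/
theorem stmt_14 (n r : ℕ) (hn : 4 ≤ n) (hr : 1 ≤ r)
    (d : ℕ → ℕ) (h0 : d 0 = 0)
    (hmono : ∀ i, i < r → d i < d (i + 1))
    (hdn : d r ≤ n)
    (J : Finset ℕ) (hJ : J = (Finset.Icc 1 r).image d)
    (D : Multiset ℕ) (hD : D = (Finset.Icc 1 r).val.map fun i => d i - d (i - 1))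
    (D' : Multiset ℕ) (hD' : D' = (Finset.Icc 1 (r - 1)).val.map fun i => d i - d (i - 1))
    (P : Multiset ℕ)
    (hP : P = if (n - 1) ∉ J ∧ n ∉ J then (2 * (n - d r) - 1) ::ₘ 1 ::ₘ (D + D)
      else if (n - 1) ∈ J ∧ n ∈ J then D + D
      else (n - d (r - 1)) ::ₘ (n - d (r - 1)) ::ₘ (D' + D')) :
    ((n - 1) ∉ J ∧ n ∉ J ∧ ∀ j ∈ J, Even j) ↔
      (P.count 1 = 1 ∧ (P.filter fun v => Odd v ∧ 1 < v).card = 1 ∧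
        ∀ v : ℕ, Even v → Even (P.count v)) := by
  -- strict monotonicity on [0, r]
  have hlt : ∀ i j, i < j → j ≤ r → d i < d j := by
    intro i j hij hjr
    induction j with
    | zero => omega
    | succ k ih =>
      rcases Nat.lt_succ_iff_lt_or_eq.mp hij with h | h
      · exact (ih h (by omega)).trans (hmono k (by omega))
      · subst h; exact hmono i (by omega)
  -- membership in J
  have hmemJ : ∀ j, j ∈ J ↔ ∃ i, 1 ≤ i ∧ i ≤ r ∧ d i = j := by
    intro j
    simp [hJ, Finset.mem_image, Finset.mem_Icc, and_assoc]
  -- membership in D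
  have hmemD : ∀ x, x ∈ D ↔ ∃ i, 1 ≤ i ∧ i ≤ r ∧ d i - d (i - 1) = x := by
    intro x
    simp [hD, Multiset.mem_map, Finset.mem_Icc, and_assoc]
  have hdpos : ∀ i, 1 ≤ i → i ≤ r → 1 ≤ d i - d (i - 1) := by
    intro i h1 h2
    have := hlt (i - 1) i (by omega) h2
    omega
  constructor
  · rintro ⟨ha1, ha2, ha3⟩
    have hcase : (n - 1) ∉ J ∧ n ∉ J := ⟨ha1, ha2⟩
    have hPA : P = (2 * (n - d r) - 1) ::ₘ 1 ::ₘ (D + D) := by rw [hP, if_pos hcase]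
    -- d r ≤ n - 2
    have hdrJ : d r ∈ J := (hmemJ (d r)).mpr ⟨r, hr, le_refl r, rfl⟩
    have hdr : d r ≤ n - 2 := by
      have h1 : d r ≠ n := fun h => ha2 (h ▸ hdrJ)
      have h2 : d r ≠ n - 1 := fun h => ha1 (h ▸ hdrJ)
      omega
    have hodd_o : Odd (2 * (n - d r) - 1) := ⟨n - d r - 1, by omega⟩
    have ho3 : 3 ≤ 2 * (n - d r) - 1 := by omega
    -- every d i even for i ≤ r
    have hde : ∀ i, i ≤ r → Even (d i) := by
      intro i hi
      rcases Nat.eq_zero_or_pos i with h | h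
      · subst h; simp [h0]
      · exact ha3 (d i) ((hmemJ (d i)).mpr ⟨i, h, hi, rfl⟩)
    -- every element of D is even and ≥ 1
    have hDel : ∀ x ∈ D, Even x ∧ 1 ≤ x := by
      intro x hx
      obtain ⟨i, h1, h2, h3⟩ := (hmemD x).mp hx
      have hle : d (i - 1) ≤ d i := le_of_lt (hlt (i - 1) i (by omega) h2)
      refine ⟨?_, h3 ▸ hdpos i h1 h2⟩
      rw [← h3]
      exact (Nat.even_sub hle).mpr (iff_of_true (hde i h2) (hde (i - 1) (by omega)))
    have h1D : (1 : ℕ) ∉ D := by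
      intro h
      have := hDel 1 h
      exact (Nat.not_even_one) this.1
    refine ⟨?_, ?_, ?_⟩
    · rw [hPA]
      rw [Multiset.count_cons, Multiset.count_cons, Multiset.count_add,
        Multiset.count_eq_zero.mpr h1D]
      simp
      omega
    · rw [hPA]
      have hp1 : ¬ (Odd (1 : ℕ) ∧ 1 < 1) := by simp
      have hpo : Odd (2 * (n - d r) - 1) ∧ 1 < 2 * (n - d r) - 1 := ⟨hodd_o, by omega⟩
      have hfD : D.filter (fun v => Odd v ∧ 1 < v) = 0 := by
        rw [Multiset.filter_eq_nil]
        intro a ha hpa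
        exact (Nat.not_odd_iff_even.mpr (hDel a ha).1) hpa.1
      rw [Multiset.filter_cons, Multiset.filter_cons, Multiset.filter_add, hfD,
        if_pos hpo, if_neg hp1]
      simp
    · intro v hv
      have hv1 : v ≠ 1 := by rintro rfl; exact Nat.not_even_one hv
      have hvo : v ≠ 2 * (n - d r) - 1 := by
        rintro rfl
        exact (Nat.not_odd_iff_even.mpr hv) hodd_o
      rw [hPA, Multiset.count_cons, Multiset.count_cons, Multiset.count_add,
        if_neg hvo, if_neg hv1]
      exact ⟨D.count v, by ring⟩
  · rintro ⟨h1, h2, _⟩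
    by_cases hA : (n - 1) ∉ J ∧ n ∉ J
    · have hPA : P = (2 * (n - d r) - 1) ::ₘ 1 ::ₘ (D + D) := by rw [hP, if_pos hA]
      -- from count 1 = 1 : 1 ∉ D
      rw [hPA, Multiset.count_cons, Multiset.count_cons, Multiset.count_add] at h1
      have h1D : D.count 1 = 0 := by
        rcases ite_eq_or_eq ((1:ℕ) = 2 * (n - d r) - 1) 1 0 with h | h <;> omega
      -- from filter card = 1 : no odd > 1 elements in D
      have hp1 : ¬ (Odd (1 : ℕ) ∧ 1 < 1) := by simp
      rw [hPA, Multiset.filter_cons, Multiset.filter_cons, Multiset.filter_add,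
        if_neg hp1] at h2
      simp only [Multiset.card_add, Multiset.card_zero] at h2
      have hfD : (D.filter (fun v => Odd v ∧ 1 < v)).card = 0 := by
        rcases ite_eq_or_eq (Odd (2 * (n - d r) - 1) ∧ 1 < 2 * (n - d r) - 1)
          ({2 * (n - d r) - 1} : Multiset ℕ) 0 with h | h <;>
          rw [h] at h2 <;>
          simp only [Multiset.card_singleton, Multiset.card_zero] at h2 <;> omega
      -- so each element of D is even
      have hDe : ∀ x ∈ D, Even x := by
        intro x hx
        have h1notD : (1 : ℕ) ∉ D := Multiset.count_eq_zero.mp h1D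
        have hx1 : x ≠ 1 := fun h => h1notD (h ▸ hx)
        obtain ⟨i, hi1, hi2, hi3⟩ := (hmemD x).mp hx
        have hxpos := hi3 ▸ hdpos i hi1 hi2
        rcases Nat.even_or_odd x with h | h
        · exact h
        · exfalso
          have hxmem : x ∈ D.filter (fun v => Odd v ∧ 1 < v) :=
            Multiset.mem_filter.mpr ⟨hx, h, by omega⟩
          have := Multiset.card_pos_iff_exists_mem.mpr ⟨x, hxmem⟩
          omega
      -- hence all d i even
      have hde : ∀ i, i ≤ r → Even (d i) := by
        intro i
        induction i with
        | zero => intro _; simp [h0]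
        | succ k ih =>
          intro hk
          have hkr : k ≤ r := by omega
          have hmem : d (k + 1) - d k ∈ D := by
            refine (hmemD _).mpr ⟨k + 1, by omega, hk, by simp⟩
          have hle : d k ≤ d (k + 1) := le_of_lt (hmono k (by omega))
          exact ((Nat.even_sub hle).mp (hDe _ hmem)).mpr (ih hkr)
      refine ⟨hA.1, hA.2, ?_⟩
      intro j hj
      obtain ⟨i, hi1, hi2, hi3⟩ := (hmemJ j).mp hj
      exact hi3 ▸ hde i hi2
    · -- in the non-A cases, count 1 is even, contradicting h1
      exfalso
      rw [hP, if_neg hA] at h1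
      by_cases hB : (n - 1) ∈ J ∧ n ∈ J
      · rw [if_pos hB, Multiset.count_add] at h1
        omega
      · rw [if_neg hB, Multiset.count_cons, Multiset.count_cons, Multiset.count_add] at h1
        rcases ite_eq_or_eq ((1:ℕ) = n - d (r - 1)) 1 0 with h | h <;> rw [h] at h1 <;> omega
end

section
/- Define z(J) ∈ {1, 2, 4} by: z(J) = 4 if n-1 ∉ J, n ∉ J, and every element of J is even; z(J) = 2 if either (n-1 ∉ J, n ∉ J, and some element of J is odd) or (exactly one of n-1, n is in J, every j ∈ J with j < n-1 is even, and n is even); and z(J) = 1 otherwise. Then for nonempty subsets J, J' of {1, ..., n}: if P_D(J) = P_D(J') as multisets, then z(J) = z(J'). (That is, in type D_n, the order of the fiber group Z(J) of Graham's quotient map depends only on the nilpotent orbit containing the T_ad-orbit τ_J.) -/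
/-- The set `J = {d 1, ..., d r}` for a strictly increasing `d` with `d 0 = 0`. -/
def grahamJset (r : ℕ) (d : ℕ → ℕ) : Finset ℕ := (Finset.Icc 1 r).image d

/-- The type `D_n` unreduced partition `P_D(J)` attached to `J = {d 1 < ... < d r}`. -/
def grahamPD (n r : ℕ) (d : ℕ → ℕ) : Multiset ℕ :=
  if (n - 1) ∉ grahamJset r d ∧ n ∉ grahamJset r d then
    (2 * (n - d r) - 1) ::ₘ 1 ::ₘ
      (((Finset.Icc 1 r).val.map fun i => d i - d (i - 1)) +
        (Finset.Icc 1 r).val.map fun i => d i - d (i - 1))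
  else if (n - 1) ∈ grahamJset r d ∧ n ∈ grahamJset r d then
    ((Finset.Icc 1 r).val.map fun i => d i - d (i - 1)) +
      (Finset.Icc 1 r).val.map fun i => d i - d (i - 1)
  else
    (n - d (r - 1)) ::ₘ (n - d (r - 1)) ::ₘ
      (((Finset.Icc 1 (r - 1)).val.map fun i => d i - d (i - 1)) +
        (Finset.Icc 1 (r - 1)).val.map fun i => d i - d (i - 1))

/-- The order `z(J) ∈ {1, 2, 4}` of the fiber group `Z(J)` in type `D_n`. -/
def grahamZ (n r : ℕ) (d : ℕ → ℕ) : ℕ :=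
  if (n - 1) ∉ grahamJset r d ∧ n ∉ grahamJset r d ∧ ∀ j ∈ grahamJset r d, Even j then 4
  else if ((n - 1) ∉ grahamJset r d ∧ n ∉ grahamJset r d ∧ ∃ j ∈ grahamJset r d, Odd j) ∨
      ((((n - 1) ∈ grahamJset r d ∧ n ∉ grahamJset r d) ∨
          ((n - 1) ∉ grahamJset r d ∧ n ∈ grahamJset r d)) ∧
        (∀ j ∈ grahamJset r d, j < n - 1 → Even j) ∧ Even n) then 2
  else 1

private lemma dmono_le {r : ℕ} {d : ℕ → ℕ} (hmono : ∀ i, i < r → d i < d (i + 1))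
    {i : ℕ} : ∀ {j : ℕ}, i ≤ j → j ≤ r → d i ≤ d j := by
  intro j
  induction j with
  | zero => intro h _; obtain rfl : i = 0 := Nat.le_zero.mp h; exact le_rfl
  | succ k ih =>
    intro h hk
    rcases Nat.lt_or_ge i (k + 1) with h' | h'
    · exact le_trans (ih (by omega) (by omega)) (le_of_lt (hmono k (by omega)))
    · obtain rfl : i = k + 1 := le_antisymm h h'; exact le_rfl

private lemma dmono_lt {r : ℕ} {d : ℕ → ℕ} (hmono : ∀ i, i < r → d i < d (i + 1))
    {i j : ℕ} (hij : i < j) (hjr : j ≤ r) : d i < d j := by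
  have h1 : d i ≤ d (j - 1) := dmono_le hmono (by omega) (by omega)
  have h2 : d (j - 1) < d (j - 1 + 1) := hmono (j - 1) (by omega)
  have h3 : j - 1 + 1 = j := by omega
  rw [h3] at h2
  omega

private lemma countP_map_zero {r : ℕ} (f : ℕ → ℕ) :
    Multiset.countP (fun x => ¬ Even x) ((Finset.Icc 1 r).val.map f) = 0 ↔
      ∀ i ∈ Finset.Icc 1 r, Even (f i) := by
  rw [Multiset.countP_eq_zero]
  constructor
  · intro h i hi
    exact not_not.mp (h (f i) (Multiset.mem_map.mpr ⟨i, Finset.mem_val.mpr hi, rfl⟩))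
  · intro h a ha
    obtain ⟨i, hi, rfl⟩ := Multiset.mem_map.mp ha
    exact not_not.mpr (h i (Finset.mem_val.mp hi))

private lemma evenDiffs {r : ℕ} {d : ℕ → ℕ} (h0 : d 0 = 0)
    (hmono : ∀ i, i < r → d i < d (i + 1)) :
    (∀ i ∈ Finset.Icc 1 r, Even (d i - d (i - 1))) ↔ ∀ i ∈ Finset.Icc 1 r, Even (d i) := by
  constructor
  · intro h
    have key : ∀ i, i ≤ r → Even (d i) := by
      intro i
      induction i with
      | zero => intro _; rw [h0]; exact Even.zero
      | succ k ih =>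
        intro hk
        have e1 : Even (d k) := ih (by omega)
        have e2 := h (k + 1) (Finset.mem_Icc.mpr ⟨by omega, hk⟩)
        have hle : d k ≤ d (k + 1) := le_of_lt (hmono k (by omega))
        simp only [Nat.add_sub_cancel] at e2
        rw [Nat.even_sub hle] at e2
        exact e2.mpr e1
    intro i hi
    exact key i (Finset.mem_Icc.mp hi).2
  · intro h i hi
    obtain ⟨h1, h2⟩ := Finset.mem_Icc.mp hi
    have hei : Even (d i) := h i hi
    have hei' : Even (d (i - 1)) := by
      rcases Nat.eq_or_lt_of_le h1 with h' | h'
      · rw [← h']; simp [h0]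
      · exact h (i - 1) (Finset.mem_Icc.mpr ⟨by omega, by omega⟩)
    have hle : d (i - 1) ≤ d i := dmono_le hmono (by omega) h2
    rw [Nat.even_sub hle]
    tauto

private def fInv (P : Multiset ℕ) : ℕ :=
  if Odd (Multiset.count 1 P) then
    (if Multiset.countP (fun x => ¬ Even x) P = 2 then 4 else 2)
  else if Multiset.countP (fun x => ¬ Even x) P = 0 then 2 else 1

private lemma keyZ (n r : ℕ) (hn : 4 ≤ n) (hr : 1 ≤ r) (d : ℕ → ℕ) (h0 : d 0 = 0)
    (hmono : ∀ i, i < r → d i < d (i + 1)) (hdn : d r ≤ n) :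
    grahamZ n r d = fInv (grahamPD n r d) := by
  have hmemJ : ∀ x, x ∈ grahamJset r d ↔ ∃ i, 1 ≤ i ∧ i ≤ r ∧ d i = x := by
    intro x
    simp only [grahamJset, Finset.mem_image, Finset.mem_Icc]
    constructor
    · rintro ⟨i, ⟨h1, h2⟩, h3⟩; exact ⟨i, h1, h2, h3⟩
    · rintro ⟨i, h1, h2, h3⟩; exact ⟨i, ⟨h1, h2⟩, h3⟩
  have hdrJ : d r ∈ grahamJset r d := (hmemJ _).mpr ⟨r, hr, le_rfl, rfl⟩
  have h1odd : ¬ Even (1 : ℕ) := by decide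
  by_cases hA : (n - 1) ∉ grahamJset r d ∧ n ∉ grahamJset r d
  · -- Case A
    have hdr2 : d r + 2 ≤ n := by
      have h1 : d r ≠ n := fun h => hA.2 (h ▸ hdrJ)
      have h2 : d r ≠ n - 1 := fun h => hA.1 (h ▸ hdrJ)
      omega
    have hPD : grahamPD n r d = (2 * (n - d r) - 1) ::ₘ 1 ::ₘ
        (((Finset.Icc 1 r).val.map fun i => d i - d (i - 1)) +
          (Finset.Icc 1 r).val.map fun i => d i - d (i - 1)) := by
      unfold grahamPD; rw [if_pos hA]
    have hOa : ¬ Even (2 * (n - d r) - 1) := by rintro ⟨k, hk⟩; omega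
    have hcount : Odd (Multiset.count 1 (grahamPD n r d)) := by
      rw [hPD, Nat.odd_iff]
      simp only [Multiset.count_cons, Multiset.count_add]
      split_ifs <;> omega
    have hk : Multiset.countP (fun x => ¬ Even x) (grahamPD n r d) =
        Multiset.countP (fun x => ¬ Even x)
          ((Finset.Icc 1 r).val.map fun i => d i - d (i - 1)) +
        Multiset.countP (fun x => ¬ Even x)
          ((Finset.Icc 1 r).val.map fun i => d i - d (i - 1)) + 2 := by
      rw [hPD]
      simp only [Multiset.countP_cons, Multiset.countP_add]
      rw [if_pos hOa, if_pos h1odd]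
    have hJiff : (∀ i ∈ Finset.Icc 1 r, Even (d i)) ↔ ∀ j ∈ grahamJset r d, Even j := by
      constructor
      · intro h j hj
        obtain ⟨i, h1, h2, rfl⟩ := (hmemJ j).mp hj
        exact h i (Finset.mem_Icc.mpr ⟨h1, h2⟩)
      · intro h i hi
        obtain ⟨h1, h2⟩ := Finset.mem_Icc.mp hi
        exact h (d i) ((hmemJ _).mpr ⟨i, h1, h2, rfl⟩)
    have hc0 : Multiset.countP (fun x => ¬ Even x)
        ((Finset.Icc 1 r).val.map fun i => d i - d (i - 1)) = 0 ↔
        ∀ j ∈ grahamJset r d, Even j :=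
      (countP_map_zero _).trans ((evenDiffs h0 hmono).trans hJiff)
    by_cases hall : ∀ j ∈ grahamJset r d, Even j
    · have hk2 : Multiset.countP (fun x => ¬ Even x) (grahamPD n r d) = 2 := by
        have := hc0.mpr hall; omega
      simp only [grahamZ, fInv]
      rw [if_pos ⟨hA.1, hA.2, hall⟩, if_pos hcount, if_pos hk2]
    · have hk2 : Multiset.countP (fun x => ¬ Even x) (grahamPD n r d) ≠ 2 := by
        intro h
        exact hall (hc0.mp (by omega))
      have hex : ∃ j ∈ grahamJset r d, Odd j := by
        push_neg at hall
        obtain ⟨j, hj, hje⟩ := hall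
        exact ⟨j, hj, Nat.odd_iff.mpr (by
          rw [Nat.even_iff] at hje; omega)⟩
      simp only [grahamZ, fInv]
      rw [if_neg (fun h => hall h.2.2), if_pos (Or.inl ⟨hA.1, hA.2, hex⟩),
        if_pos hcount, if_neg hk2]
  · by_cases hB : (n - 1) ∈ grahamJset r d ∧ n ∈ grahamJset r d
    · -- Case B
      have hdrn : d r = n := by
        obtain ⟨i, h1, h2, h3⟩ := (hmemJ n).mp hB.2
        have := dmono_le hmono h2 le_rfl
        omega
      have hdr1 : d (r - 1) = n - 1 ∧ 2 ≤ r := by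
        obtain ⟨i, h1, h2, h3⟩ := (hmemJ (n - 1)).mp hB.1
        have hir : i ≠ r := fun h => by rw [h, hdrn] at h3; omega
        have h4 : d i ≤ d (r - 1) := dmono_le hmono (by omega) (by omega)
        have h5 : d (r - 1) < d r := dmono_lt hmono (by omega) le_rfl
        omega
      have hPD : grahamPD n r d =
          ((Finset.Icc 1 r).val.map fun i => d i - d (i - 1)) +
            (Finset.Icc 1 r).val.map fun i => d i - d (i - 1) := by
        unfold grahamPD; rw [if_neg hA, if_pos hB]
      have hcount : ¬ Odd (Multiset.count 1 (grahamPD n r d)) := by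
        rw [hPD, Nat.odd_iff]
        simp only [Multiset.count_add]
        omega
      have hmem1 : (1 : ℕ) ∈ (Finset.Icc 1 r).val.map fun i => d i - d (i - 1) :=
        Multiset.mem_map.mpr ⟨r, Finset.mem_val.mpr (Finset.mem_Icc.mpr ⟨hr, le_rfl⟩),
          by rw [hdrn, hdr1.1]; omega⟩
      have hk0 : Multiset.countP (fun x => ¬ Even x) (grahamPD n r d) ≠ 0 := by
        rw [hPD]
        intro h
        rw [Multiset.countP_eq_zero] at h
        have h2 := not_not.mp (h 1 (Multiset.mem_add.mpr (Or.inl hmem1)))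
        rw [Nat.even_iff] at h2
        omega
      simp only [grahamZ, fInv]
      rw [if_neg (fun h => h.2.1 hB.2),
        if_neg (fun h => by
          rcases h with ⟨_, h2, _⟩ | ⟨h1, _, _⟩
          · exact h2 hB.2
          · rcases h1 with ⟨_, h2⟩ | ⟨h1, _⟩
            · exact h2 hB.2
            · exact h1 hB.1),
        if_neg hcount, if_neg hk0]
    · -- Case C
      have hC : ((n - 1) ∈ grahamJset r d ∧ n ∉ grahamJset r d) ∨
          ((n - 1) ∉ grahamJset r d ∧ n ∈ grahamJset r d) := by tauto
      have hdrbig : n - 1 ≤ d r := by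
        rcases hC with ⟨h1, _⟩ | ⟨_, h2⟩
        · obtain ⟨i, hi1, hi2, hi3⟩ := (hmemJ (n - 1)).mp h1
          have := dmono_le hmono hi2 le_rfl
          omega
        · obtain ⟨i, hi1, hi2, hi3⟩ := (hmemJ n).mp h2
          have := dmono_le hmono hi2 le_rfl
          omega
      have hdr1 : d (r - 1) + 2 ≤ n := by
        have hlt : d (r - 1) < d r := dmono_lt hmono (by omega) le_rfl
        rcases hC with ⟨h1, h2⟩ | ⟨h1, h2⟩
        · have : d r ≠ n := fun h => h2 (h ▸ hdrJ)
          omega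
        · rcases Nat.eq_or_lt_of_le hr with h' | h'
          · rw [← h']; simp [h0]; omega
          · have hmem : d (r - 1) ∈ grahamJset r d :=
              (hmemJ _).mpr ⟨r - 1, by omega, by omega, rfl⟩
            have : d (r - 1) ≠ n - 1 := fun h => h1 (h ▸ hmem)
            omega
      have hmono' : ∀ i, i < r - 1 → d i < d (i + 1) := fun i hi => hmono i (by omega)
      have hPD : grahamPD n r d = (n - d (r - 1)) ::ₘ (n - d (r - 1)) ::ₘ
          (((Finset.Icc 1 (r - 1)).val.map fun i => d i - d (i - 1)) +
            (Finset.Icc 1 (r - 1)).val.map fun i => d i - d (i - 1)) := by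
        unfold grahamPD; rw [if_neg hA, if_neg hB]
      have hcount : ¬ Odd (Multiset.count 1 (grahamPD n r d)) := by
        rw [hPD, Nat.odd_iff]
        simp only [Multiset.count_cons, Multiset.count_add]
        split_ifs <;> omega
      have hQiff : (∀ j ∈ grahamJset r d, j < n - 1 → Even j) ↔
          ∀ i ∈ Finset.Icc 1 (r - 1), Even (d i) := by
        constructor
        · intro h i hi
          obtain ⟨h1, h2⟩ := Finset.mem_Icc.mp hi
          have hle : d i ≤ d (r - 1) := dmono_le hmono h2 (by omega)
          exact h (d i) ((hmemJ _).mpr ⟨i, h1, by omega, rfl⟩) (by omega)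
        · intro h j hj hjlt
          obtain ⟨i, h1, h2, rfl⟩ := (hmemJ j).mp hj
          have hir : i ≠ r := by intro h'; rw [h'] at hjlt; omega
          exact h i (Finset.mem_Icc.mpr ⟨h1, by omega⟩)
      have hdev : (∀ i ∈ Finset.Icc 1 (r - 1), Even (d i)) → Even (d (r - 1)) := by
        intro h2
        rcases Nat.eq_or_lt_of_le hr with h' | h'
        · rw [← h']; simp [h0]
        · exact h2 (r - 1) (Finset.mem_Icc.mpr ⟨by omega, le_rfl⟩)
      have keq : Multiset.countP (fun x => ¬ Even x) (grahamPD n r d) = 0 ↔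
          (Even (n - d (r - 1)) ∧ ∀ i ∈ Finset.Icc 1 (r - 1), Even (d i - d (i - 1))) := by
        rw [hPD, Multiset.countP_eq_zero]
        constructor
        · intro h
          refine ⟨not_not.mp (h _ (Multiset.mem_cons_self _ _)), ?_⟩
          intro i hi
          refine not_not.mp (h _ ?_)
          refine Multiset.mem_cons.mpr (Or.inr (Multiset.mem_cons.mpr (Or.inr ?_)))
          exact Multiset.mem_add.mpr (Or.inl (Multiset.mem_map.mpr
            ⟨i, Finset.mem_val.mpr hi, rfl⟩))
        · rintro ⟨h1, h2⟩ a ha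
          rw [not_not]
          rcases Multiset.mem_cons.mp ha with rfl | ha
          · exact h1
          rcases Multiset.mem_cons.mp ha with rfl | ha
          · exact h1
          rcases Multiset.mem_add.mp ha with ha | ha <;>
          · obtain ⟨i, hi, rfl⟩ := Multiset.mem_map.mp ha
            exact h2 i (Finset.mem_val.mp hi)
      have hQ2 : (Even (n - d (r - 1)) ∧ ∀ i ∈ Finset.Icc 1 (r - 1), Even (d i - d (i - 1))) ↔
          ((∀ j ∈ grahamJset r d, j < n - 1 → Even j) ∧ Even n) := by
        rw [evenDiffs h0 hmono', hQiff]
        constructor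
        · rintro ⟨h1, h2⟩
          refine ⟨h2, ?_⟩
          have hh := hdev h2
          rw [Nat.even_sub (by omega : d (r - 1) ≤ n)] at h1
          exact h1.mpr hh
        · rintro ⟨h2, hev⟩
          have hh := hdev h2
          refine ⟨?_, h2⟩
          rw [Nat.even_sub (by omega : d (r - 1) ≤ n)]
          exact iff_of_true hev hh
      have cond1neg : ¬ ((n - 1) ∉ grahamJset r d ∧ n ∉ grahamJset r d ∧
          ∀ j ∈ grahamJset r d, Even j) := by
        rintro ⟨c1, c2, _⟩
        rcases hC with ⟨h1, _⟩ | ⟨_, h2⟩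
        · exact c1 h1
        · exact c2 h2
      by_cases hQ : (∀ j ∈ grahamJset r d, j < n - 1 → Even j) ∧ Even n
      · have hk0 : Multiset.countP (fun x => ¬ Even x) (grahamPD n r d) = 0 :=
          keq.mpr (hQ2.mpr hQ)
        simp only [grahamZ, fInv]
        rw [if_neg cond1neg, if_pos (Or.inr ⟨hC, hQ.1, hQ.2⟩), if_neg hcount, if_pos hk0]
      · have hk0 : Multiset.countP (fun x => ¬ Even x) (grahamPD n r d) ≠ 0 :=
          fun h => hQ (hQ2.mp (keq.mp h))
        have cond2neg : ¬ (((n - 1) ∉ grahamJset r d ∧ n ∉ grahamJset r d ∧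
            ∃ j ∈ grahamJset r d, Odd j) ∨
            ((((n - 1) ∈ grahamJset r d ∧ n ∉ grahamJset r d) ∨
              ((n - 1) ∉ grahamJset r d ∧ n ∈ grahamJset r d)) ∧
              (∀ j ∈ grahamJset r d, j < n - 1 → Even j) ∧ Even n)) := by
          rintro (⟨c1, c2, _⟩ | ⟨_, q1, q2⟩)
          · rcases hC with ⟨h1, _⟩ | ⟨_, h2⟩
            · exact c1 h1
            · exact c2 h2
          · exact hQ ⟨q1, q2⟩
        simp only [grahamZ, fInv]
        rw [if_neg cond1neg, if_neg cond2neg, if_neg hcount, if_neg hk0]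


/-- In type `D_n`, if two sets `J`, `J'` give the same unreduced partition
`P_D(J) = P_D(J')`, then `z(J) = z(J')`: the order of the fiber group of Graham's
quotient map depends only on the nilpotent orbit. -/
theorem stmt_15 (n : ℕ) (hn : 4 ≤ n)
    (r : ℕ) (hr : 1 ≤ r) (d : ℕ → ℕ) (h0 : d 0 = 0)
    (hmono : ∀ i, i < r → d i < d (i + 1)) (hdn : d r ≤ n)
    (s : ℕ) (hs : 1 ≤ s) (e : ℕ → ℕ) (h0' : e 0 = 0)
    (hmono' : ∀ i, i < s → e i < e (i + 1)) (hen : e s ≤ n)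
    (hPP : grahamPD n r d = grahamPD n s e) :
    grahamZ n r d = grahamZ n s e := by
  rw [keyZ n r hn hr d h0 hmono hdn, keyZ n s hn hs e h0' hmono' hen, hPP]
end

section
/- For every k ≥ 1, the number of integers i with 1 ≤ i ≤ n + 1 - k such that none of i, i+1, ..., i+k-1 belongs to J equals Σ_{p ∈ P(J)} max(p - k, 0). (This identity expresses that the sizes of the Jordan blocks of the matrix X_J = Σ_{i ∉ J} E_{i, i+1} are given by the gaps between consecutive elements of J ∪ {0, n+1}.) -/
/-- For every `k ≥ 1`, the number of `i` with `1 ≤ i ≤ n + 1 - k` such that none of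
`i, i+1, ..., i+k-1` belongs to `J` equals `Σ_{p ∈ P(J)} max (p - k) 0`, where
`P(J) = [(n+1-d_r) (d_r - d_{r-1}) ... (d_2 - d_1) d_1]`. -/
theorem stmt_16 (n r : ℕ) (hn : 1 ≤ n)
    (d : ℕ → ℕ) (h0 : d 0 = 0)
    (hmono : ∀ i, i < r → d i < d (i + 1))
    (hdn : d r ≤ n)
    (J : Finset ℕ) (hJ : J = (Finset.Icc 1 r).image d)
    (P : Multiset ℕ)
    (hP : P = (n + 1 - d r) ::ₘ (Finset.Icc 1 r).val.map fun i => d i - d (i - 1)) :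
    ∀ k : ℕ, 1 ≤ k →
      ((Finset.Icc 1 (n + 1 - k)).filter fun i => ∀ t ∈ Finset.range k, (i + t) ∉ J).card =
        (P.map fun p => p - k).sum := by
  -- strict monotonicity on [0, r]
  have hlt : ∀ m, m ≤ r → ∀ j, j < m → d j < d m := by
    intro m
    induction m with
    | zero => intro _ j hj; omega
    | succ m ih =>
      intro hm j hj
      rcases Nat.lt_succ_iff_lt_or_eq.mp hj with h | h
      · exact lt_trans (ih (by omega) j h) (hmono m (by omega))
      · subst h; exact hmono j (by omega)
  have hle : ∀ m, m ≤ r → ∀ j, j ≤ m → d j ≤ d m := by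
    intro m hm j hj
    rcases Nat.lt_or_ge j m with h | h
    · exact le_of_lt (hlt m hm j h)
    · have : j = m := le_antisymm hj h
      subst this; exact le_rfl
  intro k hk
  -- the upper endpoint function
  set u : ℕ → ℕ := fun j => if j < r then d (j + 1) else n + 1 with hu
  have hdle : ∀ j, j ≤ r → d j ≤ n := fun j hj => le_trans (hle r le_rfl j hj) hdn
  -- the filtered set is a disjoint union of intervals
  have hset : (Finset.Icc 1 (n + 1 - k)).filter
      (fun i => ∀ t ∈ Finset.range k, (i + t) ∉ J) =
      (Finset.range (r + 1)).biUnion (fun j => Finset.Icc (d j + 1) (u j - k)) := by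
    ext i
    simp only [Finset.mem_filter, Finset.mem_Icc, Finset.mem_biUnion, Finset.mem_range]
    constructor
    · rintro ⟨⟨h1, h2⟩, hw⟩
      set j := Nat.findGreatest (fun j => d j < i) r with hj
      have hj0 : d j < i := by
        have h00 : d 0 < i := by omega
        have := Nat.findGreatest_spec (P := fun j => d j < i) (Nat.zero_le r) h00
        simpa [← hj] using this
      have hjr : j ≤ r := Nat.findGreatest_le r
      refine ⟨j, by omega, by omega, ?_⟩
      rcases Nat.lt_or_ge j r with hjlt | hjge
      · -- j < r, so i ≤ d (j+1) and in fact i + k ≤ d (j+1)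
        have hnj : i ≤ d (j + 1) := by
          by_contra hcon
          push_neg at hcon
          have := Nat.findGreatest_is_greatest (P := fun x => d x < i)
            (show Nat.findGreatest (fun x => d x < i) r < j + 1 by omega)
            (show j + 1 ≤ r by omega)
          exact this hcon
        have hik : i + k ≤ d (j + 1) := by
          by_contra hcon
          have ht : d (j + 1) - i < k := by omega
          have hmem : i + (d (j + 1) - i) ∉ J := hw _ ht
          apply hmem
          rw [hJ]
          have heq : i + (d (j + 1) - i) = d (j + 1) := by omega
          rw [heq]
          exact Finset.mem_image.mpr ⟨j + 1, Finset.mem_Icc.mpr ⟨by omega, by omega⟩, rfl⟩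
        simp only [hu, if_pos hjlt]
        omega
      · have hjr2 : j = r := le_antisymm hjr hjge
        rw [hjr2]
        simp only [hu, if_neg (lt_irrefl r)]
        omega
    · rintro ⟨j, hjr, hji, hiu⟩
      have hjr' : j ≤ r := by omega
      have huk : i + k ≤ u j := by
        have : 1 ≤ u j - k := by omega
        omega
      have hun : u j ≤ n + 1 := by
        rcases Nat.lt_or_ge j r with h | h
        · simp only [hu, if_pos h]
          have := hdle (j + 1) (by omega)
          omega
        · simp only [hu, if_neg (by omega : ¬ j < r)]
          omega
      refine ⟨⟨by omega, by omega⟩, ?_⟩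
      intro t ht hmem
      rw [hJ] at hmem
      obtain ⟨m, hm, hdm⟩ := Finset.mem_image.mp hmem
      simp only [Finset.mem_Icc] at hm
      -- d m = i + t, with d j < i ≤ i + t < u j
      have h1 : d j < d m := by omega
      have h2 : d m < u j := by omega
      have hmj : j < m := by
        by_contra hcon
        have := hle j hjr' m (by omega)
        omega
      rcases Nat.lt_or_ge j r with h | h
      · simp only [hu, if_pos h] at h2
        have : d (j + 1) ≤ d m := hle m hm.2 (j + 1) (by omega)
        omega
      · omega
  rw [hset, Finset.card_biUnion]
  · have hcard : ∀ j, (Finset.Icc (d j + 1) (u j - k)).card = (u j - k) - d j := by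
      intro j; rw [Nat.card_Icc]; omega
    simp only [hcard]
    rw [Finset.sum_range_succ]
    have hlast : (u r - k) - d r = (n + 1 - k) - d r := by
      simp only [hu, if_neg (lt_irrefl r)]
    have hsum : ∀ j ∈ Finset.range r,
        (u j - k) - d j = (d (1 + j) - d (1 + j - 1)) - k := by
      intro j hj
      simp only [Finset.mem_range] at hj
      simp only [hu, if_pos hj]
      have h1 : 1 + j - 1 = j := by omega
      have h2 : 1 + j = j + 1 := by omega
      rw [h1, h2]
      omega
    rw [Finset.sum_congr rfl hsum, hlast, hP]
    simp only [Multiset.map_cons, Multiset.sum_cons, Multiset.map_map, Function.comp]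
    have hms : ((Finset.Icc 1 r).val.map (fun i => (d i - d (i - 1)) - k)).sum =
        ∑ i ∈ Finset.Icc 1 r, ((d i - d (i - 1)) - k) := rfl
    rw [hms, ← Finset.Ico_add_one_right_eq_Icc, Finset.sum_Ico_eq_sum_range]
    have hr1 : r + 1 - 1 = r := by omega
    rw [hr1]
    omega
  · have key : ∀ a b, a < b → b < r + 1 →
        Disjoint (Finset.Icc (d a + 1) (u a - k)) (Finset.Icc (d b + 1) (u b - k)) := by
      intro a b hab hb
      simp only [Finset.disjoint_left, Finset.mem_Icc]
      rintro i ⟨hi1, hi2⟩ ⟨hi3, hi4⟩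
      have hua : u a = d (a + 1) := by simp only [hu, if_pos (by omega : a < r)]
      have : d (a + 1) ≤ d b := hle b (by omega) (a + 1) (by omega)
      omega
    intro a ha b hb hab
    simp only [Finset.mem_coe, Finset.mem_range] at ha hb
    rcases Nat.lt_or_gt_of_ne hab with h | h
    · exact key a b h hb
    · exact (key b a h ha).symm
end
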